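/- arXiv:1707.06416 — 4 statements merged into one kernel-verified Lean document; each statement's English description precedes it below -/
import Mathlib

section
/- Let (B^H_t)_{t≥0} be a fractional Brownian motion with Hurst parameter H ∈ (0, 3/4) on a probability space (Ω, F, P) and let σ > 0. Define U_1(N) = σ³ N^{2H−1/2} Σ_{k=0}^{N−1} ( B^H_{(k+1)/N} − B^H_{k/N} ) ( ((k+1)/N)^{2H} − (k/N)^{2H} ). Then U_1(N) converges to 0 in L²(P) as N → ∞, i.e. E[U_1(N)²] → 0. -/
open MeasureTheory ProbabilityTheory Filter Topology NNReal

lemma aux_memLp_id_gaussian (v : ℝ≥0) : MemLp id 2 (gaussianReal 0 v) := by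
  by_cases hv : v = 0
  · subst hv
    rw [gaussianReal_zero_var]
    exact (memLp_const (0 : ℝ)).ae_eq (ae_eq_dirac (id : ℝ → ℝ)).symm
  · rw [gaussianReal_of_var_ne_zero _ hv]
    rw [memLp_two_iff_integrable_sq aestronglyMeasurable_id]
    rw [integrable_withDensity_iff (measurable_gaussianPDF _ _)
      (Eventually.of_forall fun x => ENNReal.ofReal_lt_top)]
    have hb : (0:ℝ) < (2 * (v:ℝ))⁻¹ := by positivity
    have h1 : Integrable (fun x : ℝ => x ^ 2 * Real.exp (-(2 * (v:ℝ))⁻¹ * x ^ 2)) := by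
      have := integrable_rpow_mul_exp_neg_mul_sq hb (show (-1:ℝ) < 2 by norm_num)
      simpa [Real.rpow_two] using this
    have h2 := h1.const_mul (Real.sqrt (2 * Real.pi * (v:ℝ)))⁻¹
    apply h2.congr
    filter_upwards with x
    simp only [gaussianPDF, id_eq]
    rw [ENNReal.toReal_ofReal (gaussianPDFReal_nonneg 0 v x)]
    simp only [gaussianPDFReal, sub_zero]
    rw [show -x ^ 2 / (2 * (v:ℝ)) = -(2 * (v:ℝ))⁻¹ * x ^ 2 by field_simp]
    ring

lemma aux_integrable_mul {Ω : Type*} [MeasurableSpace Ω] {P : Measure Ω}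
    {f g : Ω → ℝ} (hf : MemLp f 2 P) (hg : MemLp g 2 P) :
    Integrable (fun ω => f ω * g ω) P := by
  have h : MemLp (f • g) 1 P := hg.smul hf (p := 2) (q := 2) (r := 1)
  rw [memLp_one_iff_integrable] at h
  exact h

lemma aux_double_sum_le (N : ℕ) (G : ℕ → ℝ) (hG : ∀ r, 0 ≤ G r) :
    ∑ k ∈ Finset.range N, ∑ l ∈ Finset.range N,
      G (if k ≤ l then l - k else k - l) ≤ (N : ℝ) * (2 * ∑ r ∈ Finset.range N, G r) := by
  have inner : ∀ k ∈ Finset.range N, ∑ l ∈ Finset.range N,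
      G (if k ≤ l then l - k else k - l) ≤ 2 * ∑ r ∈ Finset.range N, G r := by
    intro k hk
    rw [Finset.mem_range] at hk
    rw [← Finset.sum_range_add_sum_Ico _ (Nat.succ_le_of_lt hk)]
    have e1 : ∑ l ∈ Finset.range (k+1), G (if k ≤ l then l - k else k - l)
        = ∑ l ∈ Finset.range (k+1), G (k - l) := by
      refine Finset.sum_congr rfl fun l hl => ?_
      rw [Finset.mem_range] at hl
      by_cases h : k ≤ l
      · have : l = k := le_antisymm (Nat.lt_succ_iff.mp hl) h
        simp [this]
      · simp [h]
    have e2 : ∑ l ∈ Finset.Ico (k+1) N, G (if k ≤ l then l - k else k - l)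
        = ∑ l ∈ Finset.Ico (k+1) N, G (l - k) := by
      refine Finset.sum_congr rfl fun l hl => ?_
      rw [Finset.mem_Ico] at hl
      rw [if_pos (by omega)]
    rw [e1, e2]
    have b1 : ∑ l ∈ Finset.range (k+1), G (k - l) ≤ ∑ r ∈ Finset.range N, G r := by
      have := Finset.sum_range_reflect (fun j => G j) (k+1)
      simp only [Nat.add_sub_cancel] at this
      calc ∑ l ∈ Finset.range (k+1), G (k - l) = ∑ l ∈ Finset.range (k+1), G l := this
        _ ≤ ∑ r ∈ Finset.range N, G r :=
            Finset.sum_le_sum_of_subset_of_nonneg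
              (Finset.range_subset_range.mpr (by omega)) (fun i _ _ => hG i)
    have b2 : ∑ l ∈ Finset.Ico (k+1) N, G (l - k) ≤ ∑ r ∈ Finset.range N, G r := by
      rw [Finset.sum_Ico_eq_sum_range]
      have e3 : ∑ i ∈ Finset.range (N - (k+1)), G (k + 1 + i - k)
          = ∑ i ∈ Finset.range (N - (k+1)), G (i + 1) := by
        exact Finset.sum_congr rfl fun i _ => by congr 1; omega
      rw [e3]
      calc ∑ i ∈ Finset.range (N - (k+1)), G (i + 1)
          ≤ ∑ i ∈ Finset.range (N - (k+1)), G (i + 1) + G 0 :=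
            le_add_of_nonneg_right (hG 0)
        _ = ∑ r ∈ Finset.range (N - (k+1) + 1), G r := (Finset.sum_range_succ' _ _).symm
        _ ≤ ∑ r ∈ Finset.range N, G r :=
            Finset.sum_le_sum_of_subset_of_nonneg
              (Finset.range_subset_range.mpr (by omega)) (fun i _ _ => hG i)
    linarith
  calc ∑ k ∈ Finset.range N, ∑ l ∈ Finset.range N, G (if k ≤ l then l - k else k - l)
      ≤ ∑ _k ∈ Finset.range N, (2 * ∑ r ∈ Finset.range N, G r) := Finset.sum_le_sum inner
    _ = (N : ℝ) * (2 * ∑ r ∈ Finset.range N, G r) := by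
        rw [Finset.sum_const, Finset.card_range, nsmul_eq_mul]

lemma aux_bernoulli {p x : ℝ} (hp : 1 ≤ p) (hx : 1 ≤ x) :
    x ^ p - (x - 1) ^ p ≤ p * x ^ p / x := by
  have hx0 : (0:ℝ) < x := by linarith
  have hs : (-1:ℝ) ≤ -1/x := by
    rw [neg_div, neg_le_neg_iff, div_le_one hx0]; exact hx
  have hber := one_add_mul_self_le_rpow_one_add hs hp
  have h1 : (1:ℝ) + (-1/x) = (x-1)/x := by field_simp; ring
  rw [h1] at hber
  have hxp : (0:ℝ) < x ^ p := Real.rpow_pos_of_pos hx0 p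
  have h2 : ((x-1)/x) ^ p = (x-1)^p / x^p := Real.div_rpow (by linarith : (0:ℝ) ≤ x - 1) hx0.le p
  rw [h2] at hber
  have h3 := mul_le_mul_of_nonneg_right hber hxp.le
  rw [div_mul_cancel₀ _ hxp.ne'] at h3
  have h4 : (1 + p * (-1/x)) * x ^ p = x^p - p * x^p / x := by field_simp; ring
  rw [h4] at h3
  linarith

lemma aux_subadd {p x : ℝ} (hp0 : 0 < p) (hp : p ≤ 1) (hx : 0 ≤ x) :
    (x + 1) ^ p - x ^ p ≤ 1 := by
  have key := NNReal.rpow_add_le_add_rpow (Real.toNNReal x) 1 hp0.le hp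
  have hcast : ((Real.toNNReal x + 1 : ℝ≥0) : ℝ) = x + 1 := by
    push_cast [Real.coe_toNNReal x hx]; ring
  have h1 : ((Real.toNNReal x + 1 : ℝ≥0) : ℝ) ^ p
      ≤ ((Real.toNNReal x ^ p + 1 ^ p : ℝ≥0) : ℝ) := by
    rw [← NNReal.coe_rpow]
    exact_mod_cast key
  rw [hcast] at h1
  have h2 : ((Real.toNNReal x ^ p + 1 ^ p : ℝ≥0) : ℝ) = x ^ p + 1 := by
    push_cast [NNReal.coe_rpow, Real.coe_toNNReal x hx, NNReal.one_rpow]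
    ring
  linarith

lemma aux_convex_mid {p x : ℝ} (hp : 1 ≤ p) (hx : 1 ≤ x) :
    2 * x ^ p ≤ (x - 1) ^ p + (x + 1) ^ p := by
  have h := (convexOn_rpow hp).2 (Set.mem_Ici.mpr (by linarith : (0:ℝ) ≤ x - 1))
    (Set.mem_Ici.mpr (by linarith : (0:ℝ) ≤ x + 1)) (by norm_num : (0:ℝ) ≤ 1/2)
    (by norm_num : (0:ℝ) ≤ 1/2) (by norm_num)
  simp only [smul_eq_mul] at h
  rw [show (1/2 : ℝ) * (x - 1) + (1/2) * (x + 1) = x by ring] at h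
  linarith

lemma aux_concave_mid {p x : ℝ} (hp0 : 0 ≤ p) (hp : p ≤ 1) (hx : 1 ≤ x) :
    (x - 1) ^ p + (x + 1) ^ p ≤ 2 * x ^ p := by
  have h := (Real.concaveOn_rpow hp0 hp).2 (Set.mem_Ici.mpr (by linarith : (0:ℝ) ≤ x - 1))
    (Set.mem_Ici.mpr (by linarith : (0:ℝ) ≤ x + 1)) (by norm_num : (0:ℝ) ≤ 1/2)
    (by norm_num : (0:ℝ) ≤ 1/2) (by norm_num)
  simp only [smul_eq_mul] at h
  rw [show (1/2 : ℝ) * (x - 1) + (1/2) * (x + 1) = x by ring] at h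
  linarith

lemma aux_tendsto_rpow {α : ℝ} (hα : α < 0) :
    Tendsto (fun N : ℕ => (N : ℝ) ^ α) atTop (𝓝 0) := by
  have h := tendsto_rpow_neg_atTop (show (0:ℝ) < -α by linarith)
  simp only [neg_neg] at h
  exact h.comp tendsto_natCast_atTop_atTop

lemma aux_rho_le {p : ℝ} (hp0 : 0 ≤ p) (hp1 : p ≤ 1) {y : ℝ} (hy : 0 ≤ y) :
    (y + 2) ^ p - (y + 1) ^ p - ((y + 1) ^ p - y ^ p) ≤ 0 := by
  have h := aux_concave_mid hp0 hp1 (show (1:ℝ) ≤ y + 1 by linarith)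
  rw [show y + 1 - 1 = y by ring, show y + 1 + 1 = y + 2 by ring] at h
  linarith

lemma aux_rho_ge {p : ℝ} (hp : 1 ≤ p) {y : ℝ} (hy : 0 ≤ y) :
    0 ≤ (y + 2) ^ p - (y + 1) ^ p - ((y + 1) ^ p - y ^ p) := by
  have h := aux_convex_mid hp (show (1:ℝ) ≤ y + 1 by linarith)
  rw [show y + 1 - 1 = y by ring, show y + 1 + 1 = y + 2 by ring] at h
  linarith

set_option maxHeartbeats 1600000 in
/-- The drift-correction cross term in the quadratic variation of a
geometric fractional Brownian motion converges to 0 in L²(P). -/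
theorem cross_term_tendsto_zero_L2
    {Ω : Type*} [MeasurableSpace Ω] (P : Measure Ω) [IsProbabilityMeasure P]
    (H : ℝ) (hH : H ∈ Set.Ioo (0 : ℝ) (3/4))
    (B : ℝ → Ω → ℝ)
    (hGauss : ∀ (n : ℕ) (a : Fin n → ℝ) (t : Fin n → ℝ), (∀ i, 0 ≤ t i) →
      ∃ v : ℝ≥0, P.map (fun ω => ∑ i, a i * B (t i) ω) = gaussianReal 0 v)
    (hCov : ∀ s t : ℝ, 0 ≤ s → 0 ≤ t →
      ∫ ω, B s ω * B t ω ∂P = (1/2) * (s ^ (2*H) + t ^ (2*H) - |t - s| ^ (2*H)))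
    (σ : ℝ) (hσ : 0 < σ)
    (U₁ : ℕ → Ω → ℝ)
    (hU₁ : ∀ (N : ℕ) (ω : Ω), U₁ N ω = σ^3 * (N : ℝ) ^ (2*H - 1/2) *
      ∑ k ∈ Finset.range N,
        (B (((k : ℝ) + 1)/N) ω - B ((k : ℝ)/N) ω) *
          ((((k : ℝ) + 1)/N) ^ (2*H) - ((k : ℝ)/N) ^ (2*H))) :
    Tendsto (fun N : ℕ => ∫ ω, (U₁ N ω)^2 ∂P) atTop (𝓝 0) := by
  obtain ⟨hH0, hH34⟩ := hH
  set p : ℝ := 2*H with hpdef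
  have hp0 : 0 < p := by positivity
  have hp32 : p < 3/2 := by rw [hpdef]; linarith
  rw [hpdef] at hCov hU₁
  rw [← hpdef] at hCov hU₁
  clear_value p
  -- square integrability of the process
  have hB2 : ∀ t : ℝ, 0 ≤ t → MemLp (B t) 2 P := by
    intro t ht
    obtain ⟨v, hv⟩ := hGauss 1 (fun _ => 1) (fun _ => t) (fun _ => ht)
    simp only [Fin.sum_univ_one, one_mul] at hv
    have hmeas : AEMeasurable (B t) P := by
      by_contra hmeas
      rw [Measure.map_of_not_aemeasurable hmeas] at hv
      exact (IsProbabilityMeasure.ne_zero (gaussianReal 0 v)) hv.symm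
    have h : MemLp (id ∘ B t) 2 P := by
      refine MemLp.comp_of_map ?_ hmeas
      rw [hv]; exact aux_memLp_id_gaussian v
    exact h
  have hprod : ∀ s t : ℝ, 0 ≤ s → 0 ≤ t → Integrable (fun ω => B s ω * B t ω) P :=
    fun s t hs ht => aux_integrable_mul (hB2 s hs) (hB2 t ht)
  -- covariance of increments
  have hinc : ∀ s₁ s₂ t₁ t₂ : ℝ, 0 ≤ s₁ → 0 ≤ s₂ → 0 ≤ t₁ → 0 ≤ t₂ →
      ∫ ω, (B s₂ ω - B s₁ ω) * (B t₂ ω - B t₁ ω) ∂P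
        = (1/2) * (|t₁ - s₂| ^ p + |t₂ - s₁| ^ p - |t₂ - s₂| ^ p - |t₁ - s₁| ^ p) := by
    intro s₁ s₂ t₁ t₂ hs₁ hs₂ ht₁ ht₂
    have e : (fun ω => (B s₂ ω - B s₁ ω) * (B t₂ ω - B t₁ ω))
        = fun ω => B s₂ ω * B t₂ ω - B s₂ ω * B t₁ ω - (B s₁ ω * B t₂ ω - B s₁ ω * B t₁ ω) :=
      funext fun ω => by ring
    have i1 : Integrable (fun ω => B s₂ ω * B t₂ ω - B s₂ ω * B t₁ ω) P :=
      (hprod _ _ hs₂ ht₂).sub (hprod _ _ hs₂ ht₁)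
    have i2 : Integrable (fun ω => B s₁ ω * B t₂ ω - B s₁ ω * B t₁ ω) P :=
      (hprod _ _ hs₁ ht₂).sub (hprod _ _ hs₁ ht₁)
    rw [e, integral_sub i1 i2,
      integral_sub (hprod _ _ hs₂ ht₂) (hprod _ _ hs₂ ht₁),
      integral_sub (hprod _ _ hs₁ ht₂) (hprod _ _ hs₁ ht₁),
      hCov _ _ hs₂ ht₂, hCov _ _ hs₂ ht₁, hCov _ _ hs₁ ht₂, hCov _ _ hs₁ ht₁]
    ring
  -- the comparison function
  set K : ℝ := 4 * σ^6 * (p+1)^3 with hK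
  clear_value K
  have hg0 : Tendsto (fun N : ℕ => K * (((N:ℝ)^p)⁻¹ + (N:ℝ)^p/(N:ℝ)^2
      + ((N:ℝ)^p)^2/(N:ℝ)^3)) atTop (𝓝 0) := by
    have t1 : Tendsto (fun N : ℕ => ((N:ℝ)^p)⁻¹) atTop (𝓝 0) := by
      have := aux_tendsto_rpow (show -p < 0 by linarith)
      refine this.congr fun N => ?_
      rw [Real.rpow_neg (Nat.cast_nonneg N)]
    have t2 : Tendsto (fun N : ℕ => (N:ℝ)^p/(N:ℝ)^2) atTop (𝓝 0) := by
      have := aux_tendsto_rpow (show p - 2 < 0 by linarith)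
      refine this.congr' ?_
      filter_upwards [eventually_ge_atTop 1] with N hN
      have hn0 : (0:ℝ) < N := by exact_mod_cast hN
      rw [Real.rpow_sub hn0, Real.rpow_two]
    have t3 : Tendsto (fun N : ℕ => ((N:ℝ)^p)^2/(N:ℝ)^3) atTop (𝓝 0) := by
      have := aux_tendsto_rpow (show 2*p - 3 < 0 by linarith)
      refine this.congr' ?_
      filter_upwards [eventually_ge_atTop 1] with N hN
      have hn0 : (0:ℝ) < N := by exact_mod_cast hN
      rw [Real.rpow_sub hn0, ← Real.rpow_natCast (((N:ℝ))^p) 2,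
        ← Real.rpow_mul hn0.le, ← Real.rpow_natCast (N:ℝ) 3]
      congr 2
      push_cast; ring
    have := ((t1.add t2).add t3).const_mul K
    simpa using this
  refine squeeze_zero' (Eventually.of_forall fun N => integral_nonneg fun ω => sq_nonneg _)
    ?_ hg0
  filter_upwards [eventually_ge_atTop 1] with N hN
  -- now the per-N estimate
  have hn1 : (1:ℝ) ≤ (N:ℝ) := by exact_mod_cast hN
  have hn0 : (0:ℝ) < (N:ℝ) := by linarith
  have hT0 : (0:ℝ) < (N:ℝ)^p := Real.rpow_pos_of_pos hn0 p
  set Δ : ℕ → Ω → ℝ := fun k ω => B (((k:ℝ)+1)/(N:ℝ)) ω - B ((k:ℝ)/(N:ℝ)) ω with hΔdef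
  set c : ℕ → ℝ := fun k => (((k:ℝ)+1)/(N:ℝ))^p - ((k:ℝ)/(N:ℝ))^p with hcdef
  set a : ℝ := σ^3 * (N:ℝ)^(p - 1/2) with hadef
  set ρ : ℝ → ℝ := fun x => (1/2) * (|x - 1|^p + |x + 1|^p - 2*|x|^p) with hρdef
  set D : ℕ → ℝ := fun j => ((j:ℝ)+1)^p - (j:ℝ)^p with hDdef
  set S : ℝ := ∑ r ∈ Finset.range N, |ρ ((r:ℕ):ℝ)| with hSdef
  clear_value Δ c a ρ D S
  have ht1 : ∀ k : ℕ, (0:ℝ) ≤ (k:ℝ)/(N:ℝ) := fun k => by positivity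
  have ht2 : ∀ k : ℕ, (0:ℝ) ≤ ((k:ℝ)+1)/(N:ℝ) := fun k => by positivity
  have hΔ2 : ∀ k, MemLp (Δ k) 2 P := by
    intro k
    rw [hΔdef]
    exact (hB2 _ (ht2 k)).sub (hB2 _ (ht1 k))
  have hint : ∀ k l, Integrable (fun ω => Δ k ω * Δ l ω) P :=
    fun k l => aux_integrable_mul (hΔ2 k) (hΔ2 l)
  have hΔcov : ∀ k l : ℕ, ∫ ω, Δ k ω * Δ l ω ∂P = ρ ((l:ℝ) - k) / (N:ℝ)^p := by
    intro k l
    simp only [hΔdef]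
    rw [hinc ((k:ℝ)/(N:ℝ)) (((k:ℝ)+1)/(N:ℝ)) ((l:ℝ)/(N:ℝ)) (((l:ℝ)+1)/(N:ℝ))
      (ht1 k) (ht2 k) (ht1 l) (ht2 l)]
    have habs : ∀ x : ℝ, |x / (N:ℝ)|^p = |x|^p / (N:ℝ)^p := by
      intro x
      rw [abs_div, abs_of_pos hn0, Real.div_rpow (abs_nonneg x) hn0.le]
    rw [show (l:ℝ)/(N:ℝ) - ((k:ℝ)+1)/(N:ℝ) = (((l:ℝ) - k) - 1)/(N:ℝ) by ring,
      show ((l:ℝ)+1)/(N:ℝ) - (k:ℝ)/(N:ℝ) = (((l:ℝ) - k) + 1)/(N:ℝ) by ring,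
      show ((l:ℝ)+1)/(N:ℝ) - ((k:ℝ)+1)/(N:ℝ) = ((l:ℝ) - k)/(N:ℝ) by ring,
      show (l:ℝ)/(N:ℝ) - (k:ℝ)/(N:ℝ) = ((l:ℝ) - k)/(N:ℝ) by ring,
      habs, habs, habs]
    simp only [hρdef]
    ring
  have hU' : ∀ ω, U₁ N ω = ∑ k ∈ Finset.range N, (a * c k) * Δ k ω := by
    intro ω
    rw [hU₁ N ω, ← hadef, Finset.mul_sum]
    refine Finset.sum_congr rfl fun k _ => ?_
    simp only [hΔdef, hcdef]
    ring
  have e2 : ∫ ω, (U₁ N ω)^2 ∂P = ∑ k ∈ Finset.range N, ∑ l ∈ Finset.range N,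
      ((a * c k) * (a * c l)) * (ρ ((l:ℝ) - k) / (N:ℝ)^p) := by
    have e1 : (fun ω => (U₁ N ω)^2) = fun ω => ∑ k ∈ Finset.range N, ∑ l ∈ Finset.range N,
        ((a * c k) * (a * c l)) * (Δ k ω * Δ l ω) := by
      funext ω
      rw [hU' ω, sq, Finset.sum_mul_sum]
      refine Finset.sum_congr rfl fun k _ => Finset.sum_congr rfl fun l _ => by ring
    rw [e1, integral_finset_sum _ (fun k _ =>
      integrable_finset_sum _ (fun l _ => (hint k l).const_mul _))]
    refine Finset.sum_congr rfl fun k _ => ?_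
    rw [integral_finset_sum _ (fun l _ => (hint k l).const_mul _)]
    refine Finset.sum_congr rfl fun l _ => ?_
    rw [integral_const_mul, hΔcov k l]
  -- abbreviation
  set T : ℝ := (N:ℝ)^p with hTdef
  clear_value T
  -- evenness and reduction to natural distances
  have hρeven : ∀ x : ℝ, ρ (-x) = ρ x := by
    intro x
    simp only [hρdef]
    rw [show -x - 1 = -(x+1) by ring, show -x + 1 = -(x-1) by ring, abs_neg, abs_neg, abs_neg]
    ring
  have hG : ∀ k l : ℕ, |ρ ((l:ℝ) - k)| = |ρ (((if k ≤ l then l - k else k - l : ℕ)):ℝ)| := by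
    intro k l
    rcases le_or_gt k l with h | h
    · rw [if_pos h, Nat.cast_sub h]
    · rw [if_neg (not_le.mpr h), Nat.cast_sub h.le,
        show (l:ℝ) - k = -((k:ℝ) - l) by ring, hρeven]
  have hS0 : 0 ≤ S := by
    rw [hSdef]; exact Finset.sum_nonneg fun r _ => abs_nonneg _
  -- the key estimate, for any uniform bound on the coefficients
  have key : ∀ cb : ℝ, (∀ k, k ∈ Finset.range N → |c k| ≤ cb) →
      ∫ ω, (U₁ N ω)^2 ∂P ≤ a^2 * cb^2 * T⁻¹ * ((N:ℝ) * (2 * S)) := by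
    intro cb hcb
    have hcb0 : 0 ≤ cb := le_trans (abs_nonneg _) (hcb 0 (Finset.mem_range.mpr (by omega)))
    rw [e2]
    have step : ∀ k ∈ Finset.range N, ∀ l ∈ Finset.range N,
        ((a * c k) * (a * c l)) * (ρ ((l:ℝ) - k) / T)
          ≤ (a^2 * cb^2 * T⁻¹) * |ρ ((l:ℝ) - k)| := by
      intro k hk l hl
      calc ((a * c k) * (a * c l)) * (ρ ((l:ℝ) - k) / T)
          ≤ |((a * c k) * (a * c l)) * (ρ ((l:ℝ) - k) / T)| := le_abs_self _
        _ = (|a| * |c k|) * ((|a| * |c l|) * (|ρ ((l:ℝ) - k)| / T)) := by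
            rw [abs_mul ((a * c k) * (a * c l)) (ρ ((l:ℝ) - k) / T),
              abs_mul (a * c k) (a * c l), abs_mul a (c k), abs_mul a (c l),
              abs_div (ρ ((l:ℝ) - k)) T, abs_of_pos hT0]
            ring
        _ ≤ (|a| * cb) * ((|a| * cb) * (|ρ ((l:ℝ) - k)| / T)) := by
            have h1 : 0 ≤ |ρ ((l:ℝ) - k)| / T := div_nonneg (abs_nonneg _) hT0.le
            have h2 : 0 ≤ |a| := abs_nonneg a
            have hck := hcb k hk
            have hcl := hcb l hl
            have e1 : |a| * |c l| * (|ρ ((l:ℝ) - k)| / T) ≤ |a| * cb * (|ρ ((l:ℝ) - k)| / T) := by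
              apply mul_le_mul_of_nonneg_right _ h1
              exact mul_le_mul_of_nonneg_left hcl h2
            refine mul_le_mul (mul_le_mul_of_nonneg_left hck h2) e1 ?_ ?_
            · exact mul_nonneg (mul_nonneg h2 (abs_nonneg _)) h1
            · exact mul_nonneg h2 hcb0
        _ = (a^2 * cb^2 * T⁻¹) * |ρ ((l:ℝ) - k)| := by
            rw [div_eq_mul_inv, ← sq_abs a]; ring
    calc (∑ k ∈ Finset.range N, ∑ l ∈ Finset.range N,
            ((a * c k) * (a * c l)) * (ρ ((l:ℝ) - k) / T))
        ≤ ∑ k ∈ Finset.range N, ∑ l ∈ Finset.range N,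
            (a^2 * cb^2 * T⁻¹) * |ρ ((l:ℝ) - k)| :=
          Finset.sum_le_sum fun k hk => Finset.sum_le_sum fun l hl => step k hk l hl
      _ = (a^2 * cb^2 * T⁻¹) * ∑ k ∈ Finset.range N, ∑ l ∈ Finset.range N, |ρ ((l:ℝ) - k)| := by
          rw [Finset.mul_sum]
          exact Finset.sum_congr rfl fun k _ => by rw [Finset.mul_sum]
      _ ≤ (a^2 * cb^2 * T⁻¹) * ((N:ℝ) * (2 * S)) := by
          refine mul_le_mul_of_nonneg_left ?_
            (mul_nonneg (mul_nonneg (sq_nonneg a) (sq_nonneg cb)) (inv_nonneg.mpr hT0.le))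
          have hds := aux_double_sum_le N (fun r => |ρ ((r:ℕ):ℝ)|) (fun r => abs_nonneg _)
          rw [hSdef]
          calc (∑ k ∈ Finset.range N, ∑ l ∈ Finset.range N, |ρ ((l:ℝ) - k)|)
              = ∑ k ∈ Finset.range N, ∑ l ∈ Finset.range N,
                  |ρ (((if k ≤ l then l - k else k - l : ℕ)):ℝ)| :=
                Finset.sum_congr rfl fun k _ => Finset.sum_congr rfl fun l _ => hG k l
            _ ≤ (N:ℝ) * (2 * ∑ r ∈ Finset.range N, |ρ ((r:ℕ):ℝ)|) := hds
  -- values of ρ at integers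
  have hρ0 : ρ 0 = 1 := by
    simp only [hρdef]
    rw [show (0:ℝ) - 1 = -1 by ring, abs_neg, abs_one, Real.one_rpow, zero_add, abs_one,
      Real.one_rpow, abs_zero, Real.zero_rpow hp0.ne']
    ring
  have hρi : ∀ i : ℕ, ρ ((i:ℝ)+1) = (1/2) * (D (i+1) - D i) := by
    intro i
    simp only [hρdef, hDdef]
    push_cast
    rw [show (i:ℝ) + 1 - 1 = (i:ℝ) by ring,
      abs_of_nonneg (by positivity : (0:ℝ) ≤ (i:ℝ)),
      abs_of_nonneg (by positivity : (0:ℝ) ≤ (i:ℝ) + 1 + 1),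
      abs_of_nonneg (by positivity : (0:ℝ) ≤ (i:ℝ) + 1)]
    ring
  have hsplit : ∀ F : ℕ → ℝ, ∑ r ∈ Finset.range N, F r
      = (∑ i ∈ Finset.range (N-1), F (i+1)) + F 0 := by
    intro F
    obtain ⟨M, rfl⟩ : ∃ M, N = M + 1 := ⟨N - 1, by omega⟩
    simp only [Nat.add_sub_cancel]
    exact Finset.sum_range_succ' F M
  have htel : ∑ i ∈ Finset.range (N-1), (D (i+1) - D i) = D (N-1) - D 0 :=
    Finset.sum_range_sub D (N-1)
  have hD0 : D 0 = 1 := by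
    simp only [hDdef]
    norm_num [Real.one_rpow, Real.zero_rpow hp0.ne']
  have hDnn : ∀ j : ℕ, 0 ≤ D j := by
    intro j
    simp only [hDdef]
    have := Real.rpow_le_rpow (by positivity : (0:ℝ) ≤ (j:ℝ))
      (by linarith : (j:ℝ) ≤ (j:ℝ)+1) hp0.le
    linarith
  have hcD : ∀ k : ℕ, c k = D k / T := by
    intro k
    simp only [hcdef, hDdef, hTdef]
    rw [Real.div_rpow (by positivity) hn0.le, Real.div_rpow (by positivity) hn0.le]
    ring
  have hc0 : ∀ k : ℕ, 0 ≤ c k := fun k => by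
    rw [hcD k]; exact div_nonneg (hDnn k) hT0.le
  have ha2 : a^2 = σ^6 * (T^2 / (N:ℝ)) := by
    have hT2 : T^2 = (N:ℝ)^(p*2) := by
      rw [hTdef, ← Real.rpow_natCast ((N:ℝ)^p) 2, ← Real.rpow_mul hn0.le]
      norm_num
    rw [hadef, mul_pow, show (σ^3)^2 = σ^6 by ring, hT2,
      ← Real.rpow_natCast ((N:ℝ)^(p-1/2)) 2, ← Real.rpow_mul hn0.le,
      show ((p - 1/2) * ((2:ℕ):ℝ)) = p*2 - 1 by push_cast; ring,
      Real.rpow_sub hn0, Real.rpow_one]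
  have hKσ : (0:ℝ) < σ^6 := by positivity
  rcases le_or_gt p 1 with hp1 | hp1
  · -- concave case : p ≤ 1
    have hsign : ∀ i : ℕ, ρ ((i:ℝ)+1) ≤ 0 := by
      intro i
      rw [hρi i]
      have h := aux_rho_le hp0.le hp1 (by positivity : (0:ℝ) ≤ (i:ℝ))
      simp only [hDdef]
      push_cast
      rw [show (i:ℝ)+1+1 = (i:ℝ)+2 by ring]
      linarith
    have hSb : S ≤ 2 := by
      rw [hSdef, hsplit]
      have e4 : (∑ i ∈ Finset.range (N-1), |ρ (((i+1:ℕ)):ℝ)|)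
          = ∑ i ∈ Finset.range (N-1), (-(1/2)) * (D (i+1) - D i) := by
        refine Finset.sum_congr rfl fun i _ => ?_
        rw [show (((i+1:ℕ)):ℝ) = (i:ℝ)+1 by push_cast; ring,
          abs_of_nonpos (hsign i), hρi i]
        ring
      rw [e4, ← Finset.mul_sum, htel, hD0, Nat.cast_zero, hρ0, abs_one]
      have := hDnn (N-1)
      linarith
    have hcb : ∀ k, k ∈ Finset.range N → |c k| ≤ T⁻¹ := by
      intro k hk
      rw [abs_of_nonneg (hc0 k), hcD k]
      have h1 : D k ≤ 1 := by
        have := aux_subadd hp0 hp1 (by positivity : (0:ℝ) ≤ (k:ℝ))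
        simp only [hDdef]; linarith
      rw [inv_eq_one_div, div_le_div_iff₀ hT0 hT0]
      nlinarith [h1, hT0.le, hDnn k]
    have hfin := key _ hcb
    have hexp : a^2 * T⁻¹^2 * T⁻¹ * ((N:ℝ) * (2 * S)) = 2*σ^6*T⁻¹*S := by
      rw [ha2]; field_simp [hT0.ne', hn0.ne']
    have hC : 0 ≤ T⁻¹ := inv_nonneg.mpr hT0.le
    have hA : 0 ≤ T/(N:ℝ)^2 := div_nonneg hT0.le (by positivity)
    have hB : 0 ≤ T^2/(N:ℝ)^3 := div_nonneg (sq_nonneg T) (by positivity)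
    have h3 : 1 ≤ (p+1)^3 := by nlinarith [hp0, sq_nonneg (p+1), mul_pos hp0 hp0]
    have hKb : 4*σ^6 ≤ K := by rw [hK]; nlinarith [hKσ, h3]
    have hK0 : 0 ≤ K := by rw [hK]; positivity
    have s1 : 2*σ^6*T⁻¹*S ≤ 2*σ^6*T⁻¹*2 := by
      apply mul_le_mul_of_nonneg_left hSb
      exact mul_nonneg (mul_nonneg (by norm_num) hKσ.le) hC
    have s3 : 2*σ^6*T⁻¹*2 ≤ K*T⁻¹ := by nlinarith [mul_le_mul_of_nonneg_right hKb hC]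
    have s2 : K*T⁻¹ ≤ K * (T⁻¹ + T/(N:ℝ)^2 + T^2/(N:ℝ)^3) := by
      nlinarith [mul_nonneg hK0 hA, mul_nonneg hK0 hB]
    calc ∫ ω, (U₁ N ω)^2 ∂P ≤ a^2 * T⁻¹^2 * T⁻¹ * ((N:ℝ) * (2 * S)) := hfin
      _ = 2*σ^6*T⁻¹*S := hexp
      _ ≤ K * (T⁻¹ + T/(N:ℝ)^2 + T^2/(N:ℝ)^3) := by linarith
  · -- convex case : 1 < p
    have hsign : ∀ i : ℕ, 0 ≤ ρ ((i:ℝ)+1) := by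
      intro i
      rw [hρi i]
      have h := aux_rho_ge hp1.le (by positivity : (0:ℝ) ≤ (i:ℝ))
      simp only [hDdef]
      push_cast
      rw [show (i:ℝ)+1+1 = (i:ℝ)+2 by ring]
      linarith
    have hDN : D (N-1) ≤ p * (T / (N:ℝ)) := by
      have hcast : ((N-1:ℕ):ℝ) = (N:ℝ) - 1 := by
        rw [Nat.cast_sub hN, Nat.cast_one]
      have hb := aux_bernoulli hp1.le hn1
      simp only [hDdef]
      rw [hcast, show (N:ℝ) - 1 + 1 = (N:ℝ) by ring, hTdef]
      rw [mul_div_assoc] at hb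
      linarith
    have hSb : S ≤ 1 + p * (T/(N:ℝ))/2 := by
      rw [hSdef, hsplit]
      have e4 : (∑ i ∈ Finset.range (N-1), |ρ (((i+1:ℕ)):ℝ)|)
          = ∑ i ∈ Finset.range (N-1), (1/2) * (D (i+1) - D i) := by
        refine Finset.sum_congr rfl fun i _ => ?_
        rw [show (((i+1:ℕ)):ℝ) = (i:ℝ)+1 by push_cast; ring, abs_of_nonneg (hsign i), hρi i]
      rw [e4, ← Finset.mul_sum, htel, hD0, Nat.cast_zero, hρ0, abs_one]
      linarith [hDN]
    have hcb : ∀ k, k ∈ Finset.range N → |c k| ≤ p/(N:ℝ) := by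
      intro k hk
      rw [abs_of_nonneg (hc0 k), hcD k]
      have hx1 : (1:ℝ) ≤ (k:ℝ)+1 := by
        have := Nat.cast_nonneg (α := ℝ) k
        linarith
      have hxn : (k:ℝ)+1 ≤ (N:ℝ) := by
        have h2 : (k+1 : ℕ) ≤ N := Nat.succ_le_of_lt (Finset.mem_range.mp hk)
        exact_mod_cast h2
      have hb := aux_bernoulli hp1.le hx1
      rw [show (k:ℝ)+1-1 = (k:ℝ) by ring, mul_div_assoc] at hb
      have hmono : ((k:ℝ)+1)^p / ((k:ℝ)+1) ≤ T / (N:ℝ) := by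
        rw [← Real.rpow_sub_one (by linarith : ((k:ℝ)+1) ≠ 0), hTdef,
          ← Real.rpow_sub_one hn0.ne']
        exact Real.rpow_le_rpow (by linarith) hxn (by linarith)
      have hDk : D k ≤ p * (T/(N:ℝ)) := by
        simp only [hDdef]
        have := mul_le_mul_of_nonneg_left hmono hp0.le
        linarith
      rw [div_le_div_iff₀ hT0 hn0]
      calc D k * (N:ℝ) ≤ p * (T/(N:ℝ)) * (N:ℝ) :=
            mul_le_mul_of_nonneg_right hDk hn0.le
        _ = p * T := by field_simp
    have hfin := key _ hcb
    have hexp : a^2 * (p/(N:ℝ))^2 * T⁻¹ * ((N:ℝ) * (2 * S)) = 2*σ^6*p^2*(T/(N:ℝ)^2)*S := by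
      rw [ha2]; field_simp [hT0.ne', hn0.ne']
    have hA : 0 ≤ T/(N:ℝ)^2 := div_nonneg hT0.le (by positivity)
    have hB : 0 ≤ T^2/(N:ℝ)^3 := div_nonneg (sq_nonneg T) (by positivity)
    have hC : 0 ≤ T⁻¹ := inv_nonneg.mpr hT0.le
    have s1 : 2*σ^6*p^2*(T/(N:ℝ)^2)*S ≤ 2*σ^6*p^2*(T/(N:ℝ)^2)*(1 + p*(T/(N:ℝ))/2) := by
      apply mul_le_mul_of_nonneg_left hSb
      exact mul_nonneg (by positivity) hA
    have e5 : 2*σ^6*p^2*(T/(N:ℝ)^2)*(1 + p*(T/(N:ℝ))/2)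
        = 2*p^2*(σ^6*(T/(N:ℝ)^2)) + p^3*(σ^6*(T^2/(N:ℝ)^3)) := by
      field_simp [hn0.ne']
    have h1 : 2*p^2 ≤ 4*(p+1)^3 := by nlinarith [hp0]
    have h2 : p^3 ≤ 4*(p+1)^3 := by nlinarith [hp0]
    have hA' : 0 ≤ σ^6*(T/(N:ℝ)^2) := mul_nonneg hKσ.le hA
    have hB' : 0 ≤ σ^6*(T^2/(N:ℝ)^3) := mul_nonneg hKσ.le hB
    have hC' : 0 ≤ σ^6*T⁻¹ := mul_nonneg hKσ.le hC
    have e6 : K * (T⁻¹ + T/(N:ℝ)^2 + T^2/(N:ℝ)^3)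
        = 4*(p+1)^3*(σ^6*T⁻¹) + 4*(p+1)^3*(σ^6*(T/(N:ℝ)^2)) + 4*(p+1)^3*(σ^6*(T^2/(N:ℝ)^3)) := by
      rw [hK]; ring
    calc ∫ ω, (U₁ N ω)^2 ∂P ≤ a^2 * (p/(N:ℝ))^2 * T⁻¹ * ((N:ℝ) * (2 * S)) := hfin
      _ = 2*σ^6*p^2*(T/(N:ℝ)^2)*S := hexp
      _ ≤ 2*σ^6*p^2*(T/(N:ℝ)^2)*(1 + p*(T/(N:ℝ))/2) := s1
      _ = 2*p^2*(σ^6*(T/(N:ℝ)^2)) + p^3*(σ^6*(T^2/(N:ℝ)^3)) := e5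
      _ ≤ K * (T⁻¹ + T/(N:ℝ)^2 + T^2/(N:ℝ)^3) := by
          rw [e6]
          have m1 := mul_le_mul_of_nonneg_right h1 hA'
          have m2 := mul_le_mul_of_nonneg_right h2 hB'
          have m3 : 0 ≤ 4*(p+1)^3*(σ^6*T⁻¹) := mul_nonneg (by positivity) hC'
          linarith
end

section
/- Let H ∈ (0, 3/4) and σ > 0. Define U_2(N) = (σ⁴/4) N^{2H−1/2} Σ_{k=0}^{N−1} ( ((k+1)/N)^{2H} − (k/N)^{2H} )². Then U_2(N) → 0 as N → ∞. -/
open Filter Topology NNReal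

/-- Subadditivity of rpow for exponents in (0,1]. -/
private lemma my_rpow_add_le (x h : ℝ) (hx : 0 ≤ x) (hh : 0 ≤ h) {a : ℝ} (ha0 : 0 ≤ a)
    (ha1 : a ≤ 1) : (x + h) ^ a ≤ x ^ a + h ^ a := by
  have := NNReal.rpow_add_le_add_rpow x.toNNReal h.toNNReal ha0 ha1
  have hxy : ((x.toNNReal + h.toNNReal : ℝ≥0) : ℝ) = x + h := by
    simp [Real.coe_toNNReal, hx, hh]
  have h1 : (((x.toNNReal + h.toNNReal) ^ a : ℝ≥0) : ℝ) = (x + h) ^ a := by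
    rw [NNReal.coe_rpow, hxy]
  have h2 : (((x.toNNReal) ^ a + (h.toNNReal) ^ a : ℝ≥0) : ℝ) = x ^ a + h ^ a := by
    push_cast [NNReal.coe_rpow, Real.coe_toNNReal x hx, Real.coe_toNNReal h hh]
    ring
  calc (x + h) ^ a = (((x.toNNReal + h.toNNReal) ^ a : ℝ≥0) : ℝ) := h1.symm
    _ ≤ (((x.toNNReal) ^ a + (h.toNNReal) ^ a : ℝ≥0) : ℝ) := by exact_mod_cast this
    _ = x ^ a + h ^ a := h2

/-- Lipschitz bound for rpow with exponent `≥ 1` on `[0,1]`. -/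
private lemma my_rpow_sub_le (x y : ℝ) (hx : 0 ≤ x) (hxy : x ≤ y) (hy : y ≤ 1) {a : ℝ}
    (ha1 : 1 ≤ a) : y ^ a - x ^ a ≤ a * (y - x) := by
  have hderiv : ∀ t ∈ Set.Icc (0:ℝ) 1,
      HasDerivWithinAt (fun t : ℝ => t ^ a) (a * t ^ (a - 1)) (Set.Icc (0:ℝ) 1) t := by
    intro t _
    exact (Real.hasDerivAt_rpow_const (Or.inr ha1)).hasDerivWithinAt
  have hbound : ∀ t ∈ Set.Icc (0:ℝ) 1, ‖a * t ^ (a - 1)‖ ≤ a := by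
    intro t ht
    have h1 : t ^ (a - 1) ≤ 1 := Real.rpow_le_one ht.1 ht.2 (by linarith)
    have h0 : 0 ≤ t ^ (a - 1) := Real.rpow_nonneg ht.1 _
    rw [Real.norm_eq_abs, abs_of_nonneg (by positivity)]
    nlinarith
  have := (convex_Icc (0:ℝ) 1).norm_image_sub_le_of_norm_hasDerivWithin_le hderiv hbound
    ⟨hx, le_trans hxy hy⟩ ⟨le_trans hx hxy, hy⟩
  rw [Real.norm_eq_abs, Real.norm_eq_abs, abs_of_nonneg (sub_nonneg.2 hxy)] at this
  calc y ^ a - x ^ a ≤ |y ^ a - x ^ a| := le_abs_self _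
    _ ≤ a * (y - x) := this

/-- Bounding the sum of squared increments using a telescoping sum. -/
private lemma my_sum_le (a : ℝ) (ha0 : 0 < a) {N : ℕ} (hN : 1 ≤ N) {B : ℝ}
    (hB : ∀ k : ℕ, k < N → (((k:ℝ)+1)/N) ^ a - ((k:ℝ)/N) ^ a ≤ B) :
    ∑ k ∈ Finset.range N, ((((k:ℝ)+1)/N) ^ a - ((k:ℝ)/N) ^ a)^2 ≤ B := by
  have hNpos : (0:ℝ) < N := by exact_mod_cast hN
  have htel : ∑ k ∈ Finset.range N, ((((k:ℝ)+1)/N) ^ a - ((k:ℝ)/N) ^ a) = 1 := by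
    have h := Finset.sum_range_sub (fun k : ℕ => ((k:ℝ)/N) ^ a) N
    simp only [Nat.cast_add, Nat.cast_one] at h
    rw [h]
    norm_num [div_self hNpos.ne', Real.zero_rpow ha0.ne']
  calc ∑ k ∈ Finset.range N, ((((k:ℝ)+1)/N) ^ a - ((k:ℝ)/N) ^ a)^2
      ≤ ∑ k ∈ Finset.range N, B * ((((k:ℝ)+1)/N) ^ a - ((k:ℝ)/N) ^ a) := by
        refine Finset.sum_le_sum fun k hk => ?_
        have h0 : 0 ≤ (((k:ℝ)+1)/N) ^ a - ((k:ℝ)/N) ^ a := by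
          refine sub_nonneg.2 (Real.rpow_le_rpow (by positivity) ?_ ha0.le)
          gcongr
          linarith
        have h1 := hB k (Finset.mem_range.mp hk)
        nlinarith
    _ = B * 1 := by rw [← Finset.mul_sum, htel]
    _ = B := mul_one B

private lemma my_tendsto (C c : ℝ) (hc : c < 0) :
    Tendsto (fun N : ℕ => C * (N:ℝ) ^ c) atTop (𝓝 0) := by
  have h := (tendsto_rpow_neg_atTop (neg_pos.mpr hc)).comp tendsto_natCast_atTop_atTop
  simp only [neg_neg, Function.comp_def] at h
  simpa using h.const_mul C

/-- The deterministic correction term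
U₂(N) = (σ⁴/4) N^{2H−1/2} Σ_{k=0}^{N−1} ( ((k+1)/N)^{2H} − (k/N)^{2H} )² tends to 0. -/
theorem deterministic_term_tendsto_zero
    (H : ℝ) (hH : H ∈ Set.Ioo (0 : ℝ) (3/4)) (σ : ℝ) (hσ : 0 < σ) :
    Tendsto (fun N : ℕ => σ^4/4 * (N : ℝ) ^ (2*H - 1/2) *
        ∑ k ∈ Finset.range N,
          ((((k : ℝ) + 1)/N) ^ (2*H) - ((k : ℝ)/N) ^ (2*H))^2)
      atTop (𝓝 0) := by
  obtain ⟨hH0, hH34⟩ := hH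
  have ha0 : (0:ℝ) < 2*H := by linarith
  have hfnn : ∀ᶠ N : ℕ in atTop, 0 ≤ σ^4/4 * (N : ℝ) ^ (2*H - 1/2) *
      ∑ k ∈ Finset.range N, ((((k : ℝ) + 1)/N) ^ (2*H) - ((k : ℝ)/N) ^ (2*H))^2 := by
    filter_upwards with N
    positivity
  by_cases h1 : 2*H ≤ 1
  · -- small exponent case: bound term by (1/N)^(2H), sum by N^(-2H)
    refine squeeze_zero' hfnn ?_ (my_tendsto (σ^4/4) (-(1/2)) (by norm_num))
    filter_upwards [eventually_ge_atTop 1] with N hN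
    have hNpos : (0:ℝ) < N := by exact_mod_cast hN
    have hsum : ∑ k ∈ Finset.range N,
        ((((k : ℝ) + 1)/N) ^ (2*H) - ((k : ℝ)/N) ^ (2*H))^2 ≤ (N:ℝ) ^ (-(2*H)) := by
      refine my_sum_le (2*H) ha0 hN fun k hk => ?_
      have h := my_rpow_add_le ((k:ℝ)/N) (1/N) (by positivity) (by positivity) ha0.le h1
      have heq : ((k:ℝ)+1)/N = (k:ℝ)/N + 1/N := by ring
      have h2 : ((1:ℝ)/N) ^ (2*H) = (N:ℝ) ^ (-(2*H)) := by
        rw [one_div, ← Real.rpow_neg_one, ← Real.rpow_mul hNpos.le]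
        norm_num
      rw [heq]
      calc ((k:ℝ)/N + 1/N) ^ (2*H) - ((k:ℝ)/N) ^ (2*H) ≤ ((1:ℝ)/N) ^ (2*H) := by linarith
        _ = (N:ℝ) ^ (-(2*H)) := h2
    calc σ^4/4 * (N : ℝ) ^ (2*H - 1/2) *
          ∑ k ∈ Finset.range N, ((((k : ℝ) + 1)/N) ^ (2*H) - ((k : ℝ)/N) ^ (2*H))^2
        ≤ σ^4/4 * (N : ℝ) ^ (2*H - 1/2) * (N:ℝ) ^ (-(2*H)) := by
          have : (0:ℝ) ≤ σ^4/4 * (N : ℝ) ^ (2*H - 1/2) := by positivity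
          exact mul_le_mul_of_nonneg_left hsum this
      _ = σ^4/4 * (N:ℝ) ^ (-(1/2):ℝ) := by
          rw [mul_assoc, ← Real.rpow_add hNpos,
            show (2*H - 1/2) + -(2*H) = (-(1/2):ℝ) by ring]
  · -- large exponent case: bound term by 2H/N
    push_neg at h1
    refine squeeze_zero' hfnn ?_ (my_tendsto (σ^4/4 * (2*H)) (2*H - 3/2) (by linarith))
    filter_upwards [eventually_ge_atTop 1] with N hN
    have hNpos : (0:ℝ) < N := by exact_mod_cast hN
    have hsum : ∑ k ∈ Finset.range N,
        ((((k : ℝ) + 1)/N) ^ (2*H) - ((k : ℝ)/N) ^ (2*H))^2 ≤ 2*H * (N:ℝ) ^ (-1:ℝ) := by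
      refine my_sum_le (2*H) ha0 hN fun k hk => ?_
      have hkN : (k:ℝ) + 1 ≤ N := by exact_mod_cast Nat.succ_le_of_lt hk
      have hx0 : (0:ℝ) ≤ (k:ℝ)/N := by positivity
      have hxy : (k:ℝ)/N ≤ ((k:ℝ)+1)/N := by gcongr; linarith
      have hy1 : ((k:ℝ)+1)/N ≤ 1 := by
        rw [div_le_one hNpos]; exact hkN
      have h := my_rpow_sub_le ((k:ℝ)/N) (((k:ℝ)+1)/N) hx0 hxy hy1 h1.le
      have heq : ((k:ℝ)+1)/N - (k:ℝ)/N = (N:ℝ)⁻¹ := by field_simp; ring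
      rw [heq] at h
      rw [Real.rpow_neg_one]
      exact h
    calc σ^4/4 * (N : ℝ) ^ (2*H - 1/2) *
          ∑ k ∈ Finset.range N, ((((k : ℝ) + 1)/N) ^ (2*H) - ((k : ℝ)/N) ^ (2*H))^2
        ≤ σ^4/4 * (N : ℝ) ^ (2*H - 1/2) * (2*H * (N:ℝ) ^ (-1:ℝ)) := by
          have : (0:ℝ) ≤ σ^4/4 * (N : ℝ) ^ (2*H - 1/2) := by positivity
          exact mul_le_mul_of_nonneg_left hsum this
      _ = σ^4/4 * (2*H) * (N:ℝ) ^ (2*H - 3/2) := by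
          rw [show (2*H - 3/2 : ℝ) = (2*H - 1/2) + (-1) by ring, Real.rpow_add hNpos]
          ring
end

section
/- Let H ∈ (1/2, 3/4), let Σ > 0 and let σ : [0,1] → ℝ be measurable with 0 ≤ σ(t) ≤ Σ. For N ≥ 1 and 0 ≤ k ≤ N−1 define δ_k = H(2H−1) [ ∫_0^{(k+1)/N} ∫_0^{(k+1)/N} σ(s) σ(t) |s − t|^{2H−2} ds dt − ∫_0^{k/N} ∫_0^{k/N} σ(s) σ(t) |s − t|^{2H−2} ds dt ]. Then N^{2H−1/2} Σ_{k=0}^{N−1} δ_k² → 0 as N → ∞. -/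
open MeasureTheory Filter Topology Set intervalIntegral


private lemma aux_abs_rpow_int {p : ℝ} (hp : -1 < p) (a b : ℝ) :
    IntervalIntegrable (fun u : ℝ => |u| ^ p) volume a b := by
  have h : ∀ c : ℝ, 0 ≤ c → IntervalIntegrable (fun u : ℝ => |u| ^ p) volume 0 c := by
    intro c hc
    have h0 : IntervalIntegrable (fun u : ℝ => u ^ p) volume 0 c := intervalIntegrable_rpow' hp
    rw [intervalIntegrable_iff, uIoc_of_le hc] at h0 ⊢
    exact h0.congr_fun (fun x hx => by rw [abs_of_pos hx.1]) measurableSet_Ioc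
  have h' : ∀ c : ℝ, IntervalIntegrable (fun u : ℝ => |u| ^ p) volume 0 c := by
    intro c
    rcases le_total 0 c with hc | hc
    · exact h c hc
    · rw [IntervalIntegrable.iff_comp_neg]
      simpa [abs_neg] using h (-c) (by linarith)
  exact (h' a).symm.trans (h' b)

private lemma aux_ker_int {p : ℝ} (hp : -1 < p) (s a b : ℝ) :
    IntervalIntegrable (fun t : ℝ => |s - t| ^ p) volume a b := by
  have h := (aux_abs_rpow_int hp (a - s) (b - s)).comp_sub_right s
  simpa [abs_sub_comm, sub_add_cancel] using h

private lemma aux_ker_eval {p : ℝ} (hp : -1 < p) {s a b : ℝ} (hsa : s ≤ a) (hab : a ≤ b) :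
    (∫ t in a..b, |s - t| ^ p) = ((b - s) ^ (p + 1) - (a - s) ^ (p + 1)) / (p + 1) := by
  have h1 : (∫ t in a..b, |s - t| ^ p) = ∫ t in a..b, |t - s| ^ p := by
    apply integral_congr; intro t _; show |s - t| ^ p = |t - s| ^ p; rw [abs_sub_comm]
  rw [h1, intervalIntegral.integral_comp_sub_right (fun u : ℝ => |u| ^ p) s]
  have h2 : (∫ u in (a - s)..(b - s), |u| ^ p) = ∫ u in (a - s)..(b - s), u ^ p := by
    apply integral_congr; intro u hu
    rw [uIcc_of_le (by linarith : a - s ≤ b - s)] at hu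
    show |u| ^ p = u ^ p; rw [abs_of_nonneg (by linarith [hu.1] : (0:ℝ) ≤ u)]
  rw [h2, integral_rpow (Or.inl hp)]

private lemma aux_ker_bound {p : ℝ} (hp : -1 < p) {s a b : ℝ}
    (h1 : -1 ≤ a - s) (h2 : b - s ≤ 1) (hab : a ≤ b) :
    (∫ t in a..b, |s - t| ^ p) ≤ 2 / (p + 1) := by
  have hq : 0 < p + 1 := by linarith
  have h1' : (∫ t in a..b, |s - t| ^ p) = ∫ u in (a - s)..(b - s), |u| ^ p := by
    have h : (∫ t in a..b, |s - t| ^ p) = ∫ t in a..b, |t - s| ^ p := by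
      apply integral_congr; intro t _; show |s - t| ^ p = |t - s| ^ p; rw [abs_sub_comm]
    rw [h, intervalIntegral.integral_comp_sub_right (fun u : ℝ => |u| ^ p) s]
  rw [h1']
  have hmono : (∫ u in (a - s)..(b - s), |u| ^ p) ≤ ∫ u in (-1 : ℝ)..1, |u| ^ p := by
    apply intervalIntegral.integral_mono_interval h1 (by linarith : a - s ≤ b - s) h2
    · exact Filter.Eventually.of_forall fun x => Real.rpow_nonneg (abs_nonneg x) p
    · exact aux_abs_rpow_int hp _ _
  refine hmono.trans (le_of_eq ?_)
  have e1 : (∫ u in (0:ℝ)..1, |u| ^ p) = 1 / (p + 1) := by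
    have : (∫ u in (0:ℝ)..1, |u| ^ p) = ∫ u in (0:ℝ)..1, u ^ p := by
      apply integral_congr; intro u hu
      rw [uIcc_of_le (zero_le_one)] at hu
      show |u| ^ p = u ^ p; rw [abs_of_nonneg hu.1]
    rw [this, integral_rpow (Or.inl hp), Real.one_rpow, Real.zero_rpow (by linarith : p + 1 ≠ 0)]
    norm_num
  have e2 : (∫ u in (-1:ℝ)..0, |u| ^ p) = 1 / (p + 1) := by
    have h := intervalIntegral.integral_comp_neg (a := (0:ℝ)) (b := 1) (fun u : ℝ => |u| ^ p)
    simp only [abs_neg, neg_zero, neg_neg] at h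
    rw [← h, e1]
  rw [← intervalIntegral.integral_add_adjacent_intervals
      (aux_abs_rpow_int hp (-1) 0) (aux_abs_rpow_int hp 0 1), e1, e2]
  ring

private lemma aux_mvt {q : ℝ} (hq0 : 0 < q) (hq1 : q ≤ 1) {x L : ℝ} (hx : 0 < x) (hL : 0 ≤ L) :
    (x + L) ^ q - x ^ q ≤ q * x ^ (q - 1) * L := by
  rcases eq_or_lt_of_le hL with h | h
  · simp [← h]
  obtain ⟨c, hc, hderiv⟩ := exists_hasDerivAt_eq_slope (fun y : ℝ => y ^ q)
      (fun y : ℝ => q * y ^ (q - 1)) (by linarith : x < x + L)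
      (fun y hy => (Real.continuousAt_rpow_const y q
        (Or.inl (by rw [Set.mem_Icc] at hy; nlinarith [hy.1] : y ≠ 0))).continuousWithinAt)
      (fun y hy => Real.hasDerivAt_rpow_const
        (Or.inl (by rw [Set.mem_Ioo] at hy; nlinarith [hy.1] : y ≠ 0)))
  have hcx : x ≤ c := hc.1.le
  have hle : c ^ (q - 1) ≤ x ^ (q - 1) :=
    Real.rpow_le_rpow_of_nonpos hx hcx (by linarith)
  have heq : (x + L) ^ q - x ^ q = q * c ^ (q - 1) * L := by
    have hL' : x + L - x = L := by ring
    rw [hL'] at hderiv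
    field_simp at hderiv
    linarith [hderiv]
  rw [heq]
  have h2 := mul_le_mul_of_nonneg_right (mul_le_mul_of_nonneg_left hle hq0.le) hL
  linarith

section Aux

variable {H Λ : ℝ} {σ : ℝ → ℝ}

private lemma aux_hp (hH : H ∈ Set.Ioo (1/2 : ℝ) (3/4)) : (-1 : ℝ) < 2*H - 2 := by
  have := hH.1; linarith

private lemma aux_int_t (hH : H ∈ Set.Ioo (1/2 : ℝ) (3/4)) (hΛ : 0 < Λ)
    (hσmeas : Measurable σ) (hσbd : ∀ t ∈ Set.Icc (0:ℝ) 1, 0 ≤ σ t ∧ σ t ≤ Λ)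
    {s : ℝ} (hs : s ∈ Icc (0:ℝ) 1) {c d : ℝ} (hc : 0 ≤ c) (hcd : c ≤ d) (hd : d ≤ 1) :
    IntervalIntegrable (fun t => σ s * σ t * |s - t| ^ (2*H - 2)) volume c d := by
  have hp := aux_hp hH
  have hm : Measurable (fun t : ℝ => σ s * σ t * |s - t| ^ (2*H - 2)) :=
    (measurable_const.mul hσmeas).mul
      (((measurable_const.sub measurable_id).abs).pow measurable_const)
  apply ((aux_ker_int hp s c d).const_mul (Λ^2)).mono_fun hm.aestronglyMeasurable
  rw [uIoc_of_le hcd]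
  filter_upwards [ae_restrict_mem measurableSet_Ioc] with t ht
  have ht1 : t ∈ Icc (0:ℝ) 1 := ⟨hc.trans ht.1.le, ht.2.trans hd⟩
  obtain ⟨hs0, hs1⟩ := hσbd s hs
  obtain ⟨ht0, ht1'⟩ := hσbd t ht1
  have hker : (0:ℝ) ≤ |s - t| ^ (2*H - 2) := Real.rpow_nonneg (abs_nonneg _) _
  simp only [Real.norm_eq_abs]
  rw [abs_of_nonneg (mul_nonneg (mul_nonneg hs0 ht0) hker),
      abs_of_nonneg (mul_nonneg (sq_nonneg Λ) hker)]
  exact mul_le_mul_of_nonneg_right (by nlinarith) hker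

private lemma aux_nn (hH : H ∈ Set.Ioo (1/2 : ℝ) (3/4)) (hΛ : 0 < Λ)
    (hσbd : ∀ t ∈ Set.Icc (0:ℝ) 1, 0 ≤ σ t ∧ σ t ≤ Λ)
    {s : ℝ} (hs : s ∈ Icc (0:ℝ) 1) {c d : ℝ} (hc : 0 ≤ c) (hcd : c ≤ d) (hd : d ≤ 1) :
    0 ≤ ∫ t in c..d, σ s * σ t * |s - t| ^ (2*H - 2) := by
  apply intervalIntegral.integral_nonneg hcd
  intro t ht
  have ht1 : t ∈ Icc (0:ℝ) 1 := ⟨hc.trans ht.1, ht.2.trans hd⟩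
  have := (hσbd s hs).1
  have := (hσbd t ht1).1
  have hker : (0:ℝ) ≤ |s - t| ^ (2*H - 2) := Real.rpow_nonneg (abs_nonneg _) _
  positivity

private lemma aux_bdd (hH : H ∈ Set.Ioo (1/2 : ℝ) (3/4)) (hΛ : 0 < Λ)
    (hσmeas : Measurable σ) (hσbd : ∀ t ∈ Set.Icc (0:ℝ) 1, 0 ≤ σ t ∧ σ t ≤ Λ)
    {s : ℝ} (hs : s ∈ Icc (0:ℝ) 1) {c d : ℝ} (hc : 0 ≤ c) (hcd : c ≤ d) (hd : d ≤ 1) :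
    (∫ t in c..d, σ s * σ t * |s - t| ^ (2*H - 2)) ≤ Λ^2 * (2/(2*H - 1)) := by
  have hp := aux_hp hH
  have step1 : (∫ t in c..d, σ s * σ t * |s - t| ^ (2*H - 2)) ≤
      ∫ t in c..d, Λ^2 * |s - t| ^ (2*H - 2) := by
    apply intervalIntegral.integral_mono_on hcd (aux_int_t hH hΛ hσmeas hσbd hs hc hcd hd)
      ((aux_ker_int hp s c d).const_mul (Λ^2))
    intro t ht
    have ht1 : t ∈ Icc (0:ℝ) 1 := ⟨hc.trans ht.1, ht.2.trans hd⟩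
    obtain ⟨hs0, hs1⟩ := hσbd s hs
    obtain ⟨ht0, ht1'⟩ := hσbd t ht1
    exact mul_le_mul_of_nonneg_right (by nlinarith) (Real.rpow_nonneg (abs_nonneg _) _)
  refine step1.trans ?_
  rw [intervalIntegral.integral_const_mul]
  have hb := aux_ker_bound hp (s := s) (a := c) (b := d)
    (by linarith [hs.2] : (-1:ℝ) ≤ c - s) (by linarith [hs.1] : d - s ≤ 1) hcd
  have h21 : 2*H - 2 + 1 = 2*H - 1 := by ring
  rw [h21] at hb
  exact mul_le_mul_of_nonneg_left hb (sq_nonneg Λ)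

private lemma aux_meas_outer (hH : H ∈ Set.Ioo (1/2 : ℝ) (3/4))
    (hσmeas : Measurable σ) {c d : ℝ} (hcd : c ≤ d) :
    Measurable (fun s => ∫ t in c..d, σ s * σ t * |s - t| ^ (2*H - 2)) := by
  have hunc : StronglyMeasurable
      (Function.uncurry fun s t : ℝ => σ s * σ t * |s - t| ^ (2*H - 2)) :=
    (((hσmeas.comp measurable_fst).mul (hσmeas.comp measurable_snd)).mul
      (((measurable_fst.sub measurable_snd).abs).pow measurable_const)).stronglyMeasurable
  have h := hunc.integral_prod_right (ν := volume.restrict (Set.Ioc c d))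
  have heq : (fun s => ∫ t in c..d, σ s * σ t * |s - t| ^ (2*H - 2)) =
      fun s => ∫ t in Set.Ioc c d, σ s * σ t * |s - t| ^ (2*H - 2) := by
    funext s; rw [intervalIntegral.integral_of_le hcd]
  rw [heq]
  exact h.measurable

private lemma aux_int_outer (hH : H ∈ Set.Ioo (1/2 : ℝ) (3/4)) (hΛ : 0 < Λ)
    (hσmeas : Measurable σ) (hσbd : ∀ t ∈ Set.Icc (0:ℝ) 1, 0 ≤ σ t ∧ σ t ≤ Λ)
    {c d : ℝ} (hc : 0 ≤ c) (hcd : c ≤ d) (hd : d ≤ 1)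
    {x y : ℝ} (hx : 0 ≤ x) (hxy : x ≤ y) (hy : y ≤ 1) :
    IntervalIntegrable (fun s => ∫ t in c..d, σ s * σ t * |s - t| ^ (2*H - 2)) volume x y := by
  have hq0 : (0:ℝ) < 2*H - 1 := by have := hH.1; linarith
  apply (_root_.intervalIntegrable_const (c := Λ^2 * (2/(2*H - 1))) (μ := volume) (a := x)
    (b := y)).mono_fun (aux_meas_outer hH hσmeas hcd).aestronglyMeasurable
  rw [uIoc_of_le hxy]
  filter_upwards [ae_restrict_mem measurableSet_Ioc] with s hsmem
  have hs1 : s ∈ Icc (0:ℝ) 1 := ⟨hx.trans hsmem.1.le, hsmem.2.trans hy⟩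
  simp only [Real.norm_eq_abs]
  rw [abs_of_nonneg (aux_nn hH hΛ hσbd hs1 hc hcd hd),
      abs_of_nonneg (by positivity : (0:ℝ) ≤ Λ^2 * (2/(2*H - 1)))]
  exact aux_bdd hH hΛ hσmeas hσbd hs1 hc hcd hd

end Aux

private lemma aux_main (hH : H ∈ Set.Ioo (1/2 : ℝ) (3/4)) (hΛ : 0 < Λ)
    (hσmeas : Measurable σ) (hσbd : ∀ t ∈ Set.Icc (0:ℝ) 1, 0 ≤ σ t ∧ σ t ≤ Λ)
    {a b : ℝ} (ha : 0 ≤ a) (hab : a ≤ b) (hb1 : b ≤ 1) :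
    0 ≤ (∫ s in (0:ℝ)..b, ∫ t in (0:ℝ)..b, σ s * σ t * |s - t| ^ (2*H - 2)) -
        (∫ s in (0:ℝ)..a, ∫ t in (0:ℝ)..a, σ s * σ t * |s - t| ^ (2*H - 2)) ∧
    (∫ s in (0:ℝ)..b, ∫ t in (0:ℝ)..b, σ s * σ t * |s - t| ^ (2*H - 2)) -
        (∫ s in (0:ℝ)..a, ∫ t in (0:ℝ)..a, σ s * σ t * |s - t| ^ (2*H - 2)) ≤
      Λ^2 * (3 / (2*H - 1)) * (b - a) := by
  have hp := aux_hp hH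
  have hq0 : (0:ℝ) < 2*H - 1 := by have := hH.1; linarith
  have hb0 : 0 ≤ b := ha.trans hab
  have ha1 : a ≤ 1 := hab.trans hb1
  -- decomposition
  have hdecomp1 : (∫ s in (0:ℝ)..b, ∫ t in (0:ℝ)..b, σ s * σ t * |s - t| ^ (2*H - 2)) =
      (∫ s in (0:ℝ)..a, ∫ t in (0:ℝ)..b, σ s * σ t * |s - t| ^ (2*H - 2)) +
      ∫ s in a..b, ∫ t in (0:ℝ)..b, σ s * σ t * |s - t| ^ (2*H - 2) :=
    (intervalIntegral.integral_add_adjacent_intervals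
      (aux_int_outer hH hΛ hσmeas hσbd le_rfl hb0 hb1 le_rfl ha ha1)
      (aux_int_outer hH hΛ hσmeas hσbd le_rfl hb0 hb1 ha hab hb1)).symm
  have hdecomp2 : (∫ s in (0:ℝ)..a, ∫ t in (0:ℝ)..b, σ s * σ t * |s - t| ^ (2*H - 2)) =
      (∫ s in (0:ℝ)..a, ∫ t in (0:ℝ)..a, σ s * σ t * |s - t| ^ (2*H - 2)) +
      ∫ s in (0:ℝ)..a, ∫ t in a..b, σ s * σ t * |s - t| ^ (2*H - 2) := by
    have hcongr : (∫ s in (0:ℝ)..a, ∫ t in (0:ℝ)..b, σ s * σ t * |s - t| ^ (2*H - 2)) =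
        ∫ s in (0:ℝ)..a, ((∫ t in (0:ℝ)..a, σ s * σ t * |s - t| ^ (2*H - 2)) +
          ∫ t in a..b, σ s * σ t * |s - t| ^ (2*H - 2)) := by
      apply intervalIntegral.integral_congr
      intro s hsmem
      rw [uIcc_of_le ha] at hsmem
      have hs1 : s ∈ Icc (0:ℝ) 1 := ⟨hsmem.1, hsmem.2.trans ha1⟩
      exact (intervalIntegral.integral_add_adjacent_intervals
        (aux_int_t hH hΛ hσmeas hσbd hs1 le_rfl ha ha1)
        (aux_int_t hH hΛ hσmeas hσbd hs1 ha hab hb1)).symm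
    rw [hcongr]
    exact intervalIntegral.integral_add
      (aux_int_outer hH hΛ hσmeas hσbd le_rfl ha ha1 le_rfl ha ha1)
      (aux_int_outer hH hΛ hσmeas hσbd ha hab hb1 le_rfl ha ha1)
  -- term 1 bounds
  have hT1nn : 0 ≤ ∫ s in a..b, ∫ t in (0:ℝ)..b, σ s * σ t * |s - t| ^ (2*H - 2) :=
    intervalIntegral.integral_nonneg hab (fun s hs =>
      aux_nn hH hΛ hσbd ⟨ha.trans hs.1, hs.2.trans hb1⟩ le_rfl hb0 hb1)
  have hT2nn : 0 ≤ ∫ s in (0:ℝ)..a, ∫ t in a..b, σ s * σ t * |s - t| ^ (2*H - 2) :=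
    intervalIntegral.integral_nonneg ha (fun s hs =>
      aux_nn hH hΛ hσbd ⟨hs.1, hs.2.trans ha1⟩ ha hab hb1)
  have hT1bd : (∫ s in a..b, ∫ t in (0:ℝ)..b, σ s * σ t * |s - t| ^ (2*H - 2)) ≤
      (b - a) * (Λ^2 * (2/(2*H - 1))) := by
    have h := intervalIntegral.integral_mono_on hab
      (aux_int_outer hH hΛ hσmeas hσbd le_rfl hb0 hb1 ha hab hb1)
      (_root_.intervalIntegrable_const)
      (fun s hs => aux_bdd hH hΛ hσmeas hσbd ⟨ha.trans hs.1, hs.2.trans hb1⟩ le_rfl hb0 hb1)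
    rw [intervalIntegral.integral_const, smul_eq_mul] at h
    linarith
  -- term 2 bound
  have hT2bd : (∫ s in (0:ℝ)..a, ∫ t in a..b, σ s * σ t * |s - t| ^ (2*H - 2)) ≤
      Λ^2 * (b - a) / (2*H - 1) := by
    have hcomp : IntervalIntegrable (fun s : ℝ => Λ^2 * (b - a) * (a - s) ^ (2*H - 2))
        volume 0 a := by
      have h1 : IntervalIntegrable (fun u : ℝ => u ^ (2*H - 2)) volume 0 a :=
        intervalIntegrable_rpow' hp
      simpa using ((h1.comp_sub_left a).const_mul (Λ^2 * (b - a))).symm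
    have hae : ∀ᵐ s ∂(volume.restrict (Icc (0:ℝ) a)), s ≠ a := by
      apply ae_restrict_of_ae
      refine ae_iff.mpr ?_
      simp only [ne_eq, not_not, Set.setOf_eq_eq_singleton]
      exact measure_singleton a
    have hptw : ∀ᵐ s ∂(volume.restrict (Icc (0:ℝ) a)),
        (∫ t in a..b, σ s * σ t * |s - t| ^ (2*H - 2)) ≤ Λ^2 * (b - a) * (a - s) ^ (2*H - 2) := by
      filter_upwards [ae_restrict_mem measurableSet_Icc, hae] with s hsmem hsne
      have hs1 : s ∈ Icc (0:ℝ) 1 := ⟨hsmem.1, hsmem.2.trans ha1⟩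
      have hsa : s < a := lt_of_le_of_ne hsmem.2 hsne
      have step1 : (∫ t in a..b, σ s * σ t * |s - t| ^ (2*H - 2)) ≤
          ∫ t in a..b, Λ^2 * |s - t| ^ (2*H - 2) := by
        apply intervalIntegral.integral_mono_on hab (aux_int_t hH hΛ hσmeas hσbd hs1 ha hab hb1)
          ((aux_ker_int hp s a b).const_mul (Λ^2))
        intro t ht
        have ht1 : t ∈ Icc (0:ℝ) 1 := ⟨ha.trans ht.1, ht.2.trans hb1⟩
        obtain ⟨hs0, hs1'⟩ := hσbd s hs1
        obtain ⟨ht0, ht1'⟩ := hσbd t ht1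
        exact mul_le_mul_of_nonneg_right (by nlinarith) (Real.rpow_nonneg (abs_nonneg _) _)
      refine step1.trans ?_
      rw [intervalIntegral.integral_const_mul, aux_ker_eval hp hsa.le hab]
      have hmvt := aux_mvt (q := 2*H - 1) hq0 (by have := hH.2; linarith)
        (x := a - s) (L := b - a) (by linarith) (by linarith)
      have hxL : a - s + (b - a) = b - s := by ring
      have he1 : (2*H - 1) - 1 = 2*H - 2 := by ring
      have he2 : (2*H - 2) + 1 = 2*H - 1 := by ring
      rw [hxL, he1] at hmvt
      rw [he2]
      calc Λ^2 * (((b - s) ^ (2*H - 1) - (a - s) ^ (2*H - 1)) / (2*H - 1))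
          ≤ Λ^2 * (((2*H - 1) * (a - s) ^ (2*H - 2) * (b - a)) / (2*H - 1)) := by
            apply mul_le_mul_of_nonneg_left ((div_le_div_iff_of_pos_right hq0).mpr hmvt) (sq_nonneg Λ)
        _ = Λ^2 * (b - a) * (a - s) ^ (2*H - 2) := by field_simp
    have hle := intervalIntegral.integral_mono_ae_restrict ha
      (aux_int_outer hH hΛ hσmeas hσbd ha hab hb1 le_rfl ha ha1) hcomp hptw
    refine hle.trans ?_
    rw [intervalIntegral.integral_const_mul]
    have heval : (∫ s in (0:ℝ)..a, (a - s) ^ (2*H - 2)) = a ^ (2*H - 1) / (2*H - 1) := by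
      rw [intervalIntegral.integral_comp_sub_left (fun u : ℝ => u ^ (2*H - 2)) a]
      simp only [sub_self, sub_zero]
      rw [integral_rpow (Or.inl hp), Real.zero_rpow (by linarith : 2*H - 2 + 1 ≠ 0)]
      have : 2*H - 2 + 1 = 2*H - 1 := by ring
      rw [this]; ring
    rw [heval]
    have haq : a ^ (2*H - 1) ≤ 1 := Real.rpow_le_one ha ha1 hq0.le
    have hnn : 0 ≤ Λ^2 * (b - a) := mul_nonneg (sq_nonneg Λ) (by linarith)
    calc Λ^2 * (b - a) * (a ^ (2*H - 1) / (2*H - 1))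
        ≤ Λ^2 * (b - a) * (1 / (2*H - 1)) := by
          exact mul_le_mul_of_nonneg_left ((div_le_div_iff_of_pos_right hq0).mpr haq) hnn
      _ = Λ^2 * (b - a) / (2*H - 1) := by ring
  constructor
  · rw [hdecomp1, hdecomp2]; linarith
  · rw [hdecomp1, hdecomp2]
    have heq : (b - a) * (Λ^2 * (2/(2*H - 1))) + Λ^2 * (b - a) / (2*H - 1) =
        Λ^2 * (3 / (2*H - 1)) * (b - a) := by field_simp; ring
    linarith

/-- The deterministic term N^{2H−1/2} Σ_k δ_k² built from the
variance increments of the time-varying volatility model tends to 0. -/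
theorem delta_sq_sum_tendsto_zero
    (H : ℝ) (hH : H ∈ Set.Ioo (1/2 : ℝ) (3/4))
    (Λ : ℝ) (hΛ : 0 < Λ)
    (σ : ℝ → ℝ) (hσmeas : Measurable σ)
    (hσbd : ∀ t ∈ Set.Icc (0:ℝ) 1, 0 ≤ σ t ∧ σ t ≤ Λ)
    (δ : ℕ → ℕ → ℝ)
    (hδ : ∀ N k : ℕ, δ N k = H * (2*H - 1) *
      ((∫ s in (0:ℝ)..(((k : ℝ) + 1)/N),
          ∫ t in (0:ℝ)..(((k : ℝ) + 1)/N), σ s * σ t * |s - t| ^ (2*H - 2)) -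
        ∫ s in (0:ℝ)..((k : ℝ)/N),
          ∫ t in (0:ℝ)..((k : ℝ)/N), σ s * σ t * |s - t| ^ (2*H - 2))) :
    Tendsto (fun N : ℕ => (N : ℝ) ^ (2*H - 1/2) * ∑ k ∈ Finset.range N, (δ N k)^2)
      atTop (𝓝 0) := by
  obtain ⟨hH1, hH2⟩ := hH
  have hH0 : (0:ℝ) < H := by linarith
  have hq0 : (0:ℝ) < 2*H - 1 := by linarith
  set C := 3 * H * Λ^2 with hC
  have hC0 : 0 ≤ C := by positivity
  have hδbd : ∀ N k : ℕ, k < N → |δ N k| ≤ C / N := by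
    intro N k hkN
    have hN0 : (0:ℝ) < N := by
      have : 0 < N := lt_of_le_of_lt (Nat.zero_le k) hkN
      exact_mod_cast this
    have ha : (0:ℝ) ≤ (k:ℝ) / N := by positivity
    have hab : (k:ℝ)/N ≤ ((k:ℝ)+1)/N :=
      (div_le_div_iff_of_pos_right hN0).mpr (by linarith)
    have hb1 : ((k:ℝ)+1)/N ≤ 1 := by
      rw [div_le_one hN0]
      have : (k:ℕ) + 1 ≤ N := hkN
      exact_mod_cast this
    obtain ⟨h0, h1⟩ := aux_main ⟨hH1, hH2⟩ hΛ hσmeas hσbd ha hab hb1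
    rw [hδ]
    have hL : ((k:ℝ)+1)/N - (k:ℝ)/N = 1/N := by field_simp; ring
    rw [abs_of_nonneg (mul_nonneg (mul_nonneg hH0.le hq0.le) h0)]
    calc H * (2*H - 1) * ((∫ s in (0:ℝ)..(((k : ℝ) + 1)/N),
          ∫ t in (0:ℝ)..(((k : ℝ) + 1)/N), σ s * σ t * |s - t| ^ (2*H - 2)) -
        ∫ s in (0:ℝ)..((k : ℝ)/N),
          ∫ t in (0:ℝ)..((k : ℝ)/N), σ s * σ t * |s - t| ^ (2*H - 2))
        ≤ H * (2*H - 1) * (Λ^2 * (3 / (2*H - 1)) * (((k:ℝ)+1)/N - (k:ℝ)/N)) :=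
          mul_le_mul_of_nonneg_left h1 (mul_nonneg hH0.le hq0.le)
      _ = C / N := by rw [hL, hC]; have hq' : (2*H - 1) * (2*H - 1)⁻¹ = 1 := mul_inv_cancel₀ hq0.ne'; linear_combination (3*H*Λ^2/N) * hq'
  have hsum : ∀ N : ℕ, 1 ≤ N → (N:ℝ)^(2*H - 1/2) * ∑ k ∈ Finset.range N, (δ N k)^2 ≤
      C^2 * (N:ℝ)^(2*H - 3/2) := by
    intro N hN
    have hN0 : (0:ℝ) < N := by exact_mod_cast hN
    have hsum1 : ∑ k ∈ Finset.range N, (δ N k)^2 ≤ (N:ℝ) * (C/N)^2 := by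
      have h := Finset.sum_le_card_nsmul (Finset.range N) (fun k => (δ N k)^2) ((C/N)^2)
        (fun k hk => by
          calc δ N k ^ 2 = |δ N k| ^ 2 := (sq_abs _).symm
            _ ≤ (C / (N:ℝ)) ^ 2 :=
              pow_le_pow_left₀ (abs_nonneg _) (hδbd N k (Finset.mem_range.mp hk)) 2)
      simpa [Finset.card_range, nsmul_eq_mul] using h
    have hrpow : (N:ℝ)^(2*H - 1/2) * ((N:ℝ) * (C/N)^2) = C^2 * (N:ℝ)^(2*H - 3/2) := by
      have he : (2*H - 3/2 : ℝ) = (2*H - 1/2) - 1 := by ring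
      have he2 : (N:ℝ) ^ (2*H - 3/2) = (N:ℝ) ^ (2*H - 1/2) / (N:ℝ) := by
        rw [he, Real.rpow_sub hN0, Real.rpow_one]
      rw [he2]
      field_simp
    calc (N:ℝ)^(2*H - 1/2) * ∑ k ∈ Finset.range N, (δ N k)^2
        ≤ (N:ℝ)^(2*H - 1/2) * ((N:ℝ) * (C/N)^2) :=
          mul_le_mul_of_nonneg_left hsum1 (Real.rpow_nonneg hN0.le _)
      _ = C^2 * (N:ℝ)^(2*H - 3/2) := hrpow
  have hnn : ∀ N : ℕ, 0 ≤ (N:ℝ)^(2*H - 1/2) * ∑ k ∈ Finset.range N, (δ N k)^2 :=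
    fun N => mul_nonneg (Real.rpow_nonneg (Nat.cast_nonneg N) _)
      (Finset.sum_nonneg fun k _ => sq_nonneg _)
  have htend : Tendsto (fun N : ℕ => C^2 * (N:ℝ)^(2*H - 3/2)) atTop (𝓝 0) := by
    have h1 : Tendsto (fun x : ℝ => x ^ (-(3/2 - 2*H))) atTop (𝓝 0) :=
      tendsto_rpow_neg_atTop (by linarith)
    have h2 : Tendsto (fun N : ℕ => ((N:ℝ)) ^ (2*H - 3/2)) atTop (𝓝 0) := by
      have he : (fun N : ℕ => ((N:ℝ)) ^ (2*H - 3/2)) =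
          (fun x : ℝ => x ^ (-(3/2 - 2*H))) ∘ (fun N : ℕ => (N:ℝ)) := by
        funext N
        simp only [Function.comp_apply]
        congr 1
        ring
      rw [he]
      exact h1.comp tendsto_natCast_atTop_atTop
    simpa using h2.const_mul (C^2)
  exact squeeze_zero' (Filter.Eventually.of_forall hnn)
    (Filter.eventually_atTop.mpr ⟨1, hsum⟩) htend
end

section
/- Let H ∈ (1/2, 3/4), let Σ > 0 and let σ : [0,1] → ℝ be measurable with 0 ≤ σ(t) ≤ Σ. For N ≥ 1 and 0 ≤ k, j ≤ N−1 define c^N_{kj} = H(2H−1) ∫_{k/N}^{(k+1)/N} ∫_{j/N}^{(j+1)/N} σ(s) σ(t) |s − t|^{2H−2} dt ds, and set S_N = 2 N^{4H−1} Σ_{k=0}^{N−1} Σ_{j=0}^{N−1} (c^N_{kj})². Then sup_{N ≥ 1} S_N < ∞. -/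
open MeasureTheory Filter Topology

lemma absRpow_intable {r : ℝ} (hr : -1 < r) (s a b : ℝ) :
    IntervalIntegrable (fun t => |s - t| ^ r) volume a b := by
  have base : ∀ u v : ℝ, IntervalIntegrable (fun x : ℝ => |x| ^ r) volume u v := by
    have h0 : ∀ d : ℝ, 0 ≤ d → IntervalIntegrable (fun x : ℝ => |x| ^ r) volume 0 d := by
      intro d hd
      have h1 := intervalIntegral.intervalIntegrable_rpow' (a := 0) (b := d) hr
      rw [intervalIntegrable_iff, Set.uIoc_of_le hd] at h1 ⊢
      exact h1.congr_fun (fun x hx => by rw [abs_of_nonneg hx.1.le]) measurableSet_Ioc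
    have h0' : ∀ d : ℝ, IntervalIntegrable (fun x : ℝ => |x| ^ r) volume 0 d := by
      intro d
      rcases le_total 0 d with hd | hd
      · exact h0 d hd
      · have := (IntervalIntegrable.iff_comp_neg (by simp)).mp (h0 (-d) (by linarith))
        simpa [abs_neg] using this
    intro u v
    exact ((h0' u).symm.trans (h0' v))
  simpa using (base (s - a) (s - b)).comp_sub_left s

lemma absRpow_integral {r : ℝ} (hr : -1 < r) (hr0 : r < 0) (s d : ℝ) (hd : 0 ≤ d) :
    ∫ t in (s - d)..(s + d), |s - t| ^ r = 2 * d ^ (r + 1) / (r + 1) := by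
  have h1 : (∫ t in (s - d)..(s + d), |s - t| ^ r) = ∫ x in (-d)..d, |x| ^ r := by
    have := intervalIntegral.integral_comp_sub_left (a := s - d) (b := s + d)
      (fun x => |x| ^ r) s
    simpa using this
  have hbase : ∀ u v : ℝ, IntervalIntegrable (fun x : ℝ => |x| ^ r) volume u v := by
    intro u v
    simpa [abs_sub_comm] using absRpow_intable hr 0 u v
  have hneg : (∫ x in (-d)..(0:ℝ), |x| ^ r) = ∫ x in (0:ℝ)..d, |x| ^ r := by
    have := intervalIntegral.integral_comp_neg (a := (0:ℝ)) (b := d) (fun x => |x| ^ r)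
    simpa [abs_neg] using this.symm
  have hval : (∫ x in (0:ℝ)..d, |x| ^ r) = d ^ (r + 1) / (r + 1) := by
    have hcongr : Set.EqOn (fun x : ℝ => |x| ^ r) (fun x : ℝ => x ^ r) (Set.uIcc 0 d) := by
      intro x hx
      rw [Set.uIcc_of_le hd] at hx
      simp [abs_of_nonneg hx.1]
    rw [intervalIntegral.integral_congr hcongr, integral_rpow (Or.inl hr),
      Real.zero_rpow (by linarith : r + 1 ≠ 0)]
    ring
  rw [h1, ← intervalIntegral.integral_add_adjacent_intervals (hbase (-d) 0) (hbase 0 d),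
    hneg, hval]
  ring

lemma inner_near {r Λ : ℝ} (hr : -1 < r) (hr0 : r < 0) (hΛ : 0 < Λ)
    {σ : ℝ → ℝ} (hσmeas : Measurable σ)
    (hσbd : ∀ t ∈ Set.Icc (0:ℝ) 1, 0 ≤ σ t ∧ σ t ≤ Λ)
    {s u v d : ℝ} (huv : u ≤ v) (hu0 : 0 ≤ u) (hv1 : v ≤ 1)
    (hs : s ∈ Set.Icc (0:ℝ) 1) (hd : 0 ≤ d)
    (hsu : s - d ≤ u) (hvs : v ≤ s + d) :
    ∫ t in u..v, σ s * σ t * |s - t| ^ r ≤ Λ ^ 2 * (2 * d ^ (r + 1) / (r + 1)) := by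
  have hΛint : IntervalIntegrable (fun t => Λ ^ 2 * |s - t| ^ r) volume u v :=
    (absRpow_intable hr s u v).const_mul _
  have hmeas : Measurable fun t => σ s * σ t * |s - t| ^ r := by fun_prop
  have hptle : ∀ t ∈ Set.Icc u v, σ s * σ t * |s - t| ^ r ≤ Λ ^ 2 * |s - t| ^ r := by
    intro t ht
    have ht01 : t ∈ Set.Icc (0:ℝ) 1 := ⟨le_trans hu0 ht.1, le_trans ht.2 hv1⟩
    have h1 := hσbd s hs
    have h2 := hσbd t ht01
    have h3 : (0:ℝ) ≤ |s - t| ^ r := Real.rpow_nonneg (abs_nonneg _) _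
    have : σ s * σ t ≤ Λ ^ 2 := by nlinarith
    nlinarith
  have hint : IntervalIntegrable (fun t => σ s * σ t * |s - t| ^ r) volume u v := by
    apply hΛint.mono_fun hmeas.aestronglyMeasurable
    filter_upwards [ae_restrict_mem measurableSet_uIoc] with t ht
    have ht' : t ∈ Set.Icc u v := by
      rw [Set.uIoc_of_le huv] at ht; exact ⟨ht.1.le, ht.2⟩
    have ht01 : t ∈ Set.Icc (0:ℝ) 1 := ⟨le_trans hu0 ht'.1, le_trans ht'.2 hv1⟩
    have h1 := hσbd s hs
    have h2 := hσbd t ht01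
    have h3 : (0:ℝ) ≤ |s - t| ^ r := Real.rpow_nonneg (abs_nonneg _) _
    show ‖σ s * σ t * |s - t| ^ r‖ ≤ ‖Λ ^ 2 * |s - t| ^ r‖
    rw [Real.norm_eq_abs, Real.norm_eq_abs,
      abs_of_nonneg (mul_nonneg (mul_nonneg h1.1 h2.1) h3),
      abs_of_nonneg (mul_nonneg (by positivity) h3)]
    exact hptle t ht'
  have step1 : (∫ t in u..v, σ s * σ t * |s - t| ^ r) ≤ ∫ t in u..v, Λ ^ 2 * |s - t| ^ r :=
    intervalIntegral.integral_mono_on huv hint hΛint hptle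
  have step2 : (∫ t in u..v, Λ ^ 2 * |s - t| ^ r) ≤
      ∫ t in (s - d)..(s + d), Λ ^ 2 * |s - t| ^ r := by
    have hsd : s - d ≤ s + d := by linarith
    rw [intervalIntegral.integral_of_le huv, intervalIntegral.integral_of_le hsd]
    apply setIntegral_mono_set
    · exact ((absRpow_intable hr s (s - d) (s + d)).const_mul (Λ ^ 2)).1
    · filter_upwards with t
      positivity
    · exact HasSubset.Subset.eventuallyLE (Set.Ioc_subset_Ioc hsu hvs)
  calc (∫ t in u..v, σ s * σ t * |s - t| ^ r) ≤ _ := step1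
    _ ≤ _ := step2
    _ = Λ ^ 2 * (2 * d ^ (r + 1) / (r + 1)) := by
        rw [intervalIntegral.integral_const_mul, absRpow_integral hr hr0 s d hd]

lemma sum_dist_le {f : ℕ → ℝ} (hf : ∀ d, 0 ≤ f d) (hsum : Summable f) (N k : ℕ) :
    ∑ j ∈ Finset.range N, f (Nat.dist k j) ≤ 2 * ∑' d, f d := by
  classical
  have key : ∀ s : Finset ℕ, (∀ x ∈ s, ∀ y ∈ s, Nat.dist k x = Nat.dist k y → x = y) →
      ∑ j ∈ s, f (Nat.dist k j) ≤ ∑' d, f d := by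
    intro s hinj
    have := Finset.sum_image (g := Nat.dist k) (f := f) (s := s) hinj
    rw [← this]
    exact Summable.sum_le_tsum _ (fun d _ => hf d) hsum
  have hsplit := Finset.sum_filter_add_sum_filter_not (Finset.range N)
    (fun j => j ≤ k) (fun j => f (Nat.dist k j))
  have h1 : ∑ j ∈ (Finset.range N).filter (fun j => j ≤ k), f (Nat.dist k j) ≤ ∑' d, f d := by
    apply key
    intro x hx y hy h
    simp only [Finset.mem_filter] at hx hy
    simp only [Nat.dist] at h
    omega
  have h2 : ∑ j ∈ (Finset.range N).filter (fun j => ¬ j ≤ k), f (Nat.dist k j) ≤ ∑' d, f d := by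
    apply key
    intro x hx y hy h
    simp only [Finset.mem_filter] at hx hy
    simp only [Nat.dist] at h
    omega
  linarith

lemma summable_g {p : ℝ} (hp : p < -1) (A : ℝ) :
    Summable (fun d : ℕ => if d ≤ 1 then A else ((d - 1 : ℕ) : ℝ) ^ p) := by
  rw [← summable_nat_add_iff 2]
  have h0 : Summable (fun n : ℕ => ((n : ℝ)) ^ p) := Real.summable_nat_rpow.2 hp
  have h1 : Summable (fun n : ℕ => (((n + 1 : ℕ) : ℝ)) ^ p) := by
    exact_mod_cast (summable_nat_add_iff 1).2 h0
  apply h1.congr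
  intro n
  have : n + 2 - 1 = n + 1 := by omega
  simp [this]

lemma near_alg {h1 h2 L Q P n : ℝ} (hh1 : 0 < h1) (hh2 : 0 < h2) (hL : 0 < L)
    (hQ : 0 < Q) (hP : 0 < P) (hn : 0 < n) :
    h1 * h2 * (L^2 * (2 * (Q/P) / h2) * (1/n)) ≤ h1*h2*L^2*(2*Q/h2+1) * (P*n)⁻¹ := by
  rw [div_add' _ _ _ hh2.ne']
  field_simp
  linarith

lemma far_alg {h1 h2 L M R n B : ℝ} (hh1 : 0 < h1) (hh2 : 0 < h2) (hL : 0 < L)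
    (hM : 0 ≤ M) (hR : 0 < R) (hn : 0 < n) (hB : 0 < B) :
    h1 * h2 * (L^2 * (M/R) * (1/n) * (1/n)) ≤ h1*h2*L^2*(B+1) * (R*n*n)⁻¹ * M := by
  have hx : (0:ℝ) < h1*h2*L^2 := by positivity
  have key : h1*h2*L^2 ≤ h1*h2*L^2*(B+1) := by nlinarith [mul_pos hx hB]
  have hfacts : (0:ℝ) ≤ R⁻¹ * n⁻¹ * n⁻¹ * M := by positivity
  calc h1 * h2 * (L^2 * (M/R) * (1/n) * (1/n))
      = h1*h2*L^2 * (R⁻¹ * n⁻¹ * n⁻¹ * M) := by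
        field_simp
    _ ≤ h1*h2*L^2*(B+1) * (R⁻¹ * n⁻¹ * n⁻¹ * M) := mul_le_mul_of_nonneg_right key hfacts
    _ = h1*h2*L^2*(B+1) * (R*n*n)⁻¹ * M := by
        field_simp

noncomputable def aFun (H : ℝ) : ℕ → ℝ :=
  fun d => if d ≤ 1 then 1 else ((d - 1 : ℕ) : ℝ) ^ (2*H - 2)

noncomputable def gFun (H : ℝ) : ℕ → ℝ :=
  fun d => if d ≤ 1 then 1 else ((d - 1 : ℕ) : ℝ) ^ (4*H - 4)

lemma pair_bound {H Λ : ℝ} (hH1 : (1/2 : ℝ) < H) (hH2 : H < (3/4 : ℝ)) (hΛ : 0 < Λ)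
    {σ : ℝ → ℝ} (hσmeas : Measurable σ)
    (hσbd : ∀ t ∈ Set.Icc (0:ℝ) 1, 0 ≤ σ t ∧ σ t ≤ Λ)
    (N k j : ℕ) (hN : 0 < N) (hk : k < N) (hj : j < N) :
    |H * (2*H - 1) * ∫ s in ((k : ℝ)/N)..(((k : ℝ) + 1)/N),
        ∫ t in ((j : ℝ)/N)..(((j : ℝ) + 1)/N), σ s * σ t * |s - t| ^ (2*H - 2)| ≤
      (H*(2*H-1)*Λ^2*(2*(2:ℝ)^(2*H-1)/(2*H-1)+1)) * (((N:ℝ)^(2*H))⁻¹) *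
        aFun H (Nat.dist k j) := by
  have hr : (-1:ℝ) < 2*H - 2 := by linarith
  have hr0 : 2*H - 2 < 0 := by linarith
  have h2H : (0:ℝ) < 2*H - 1 := by linarith
  have hHpos : (0:ℝ) < H := by linarith
  have hQ : (0:ℝ) < (2:ℝ) ^ (2*H-1) := Real.rpow_pos_of_pos two_pos _
  have hNpos : (0:ℝ) < N := by exact_mod_cast hN
  have hH0 : (0:ℝ) < H*(2*H-1) := by positivity
  have hkle : (k:ℝ)/N ≤ ((k:ℝ)+1)/N := by gcongr; linarith
  have hjle : (j:ℝ)/N ≤ ((j:ℝ)+1)/N := by gcongr; linarith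
  have hk0 : (0:ℝ) ≤ (k:ℝ)/N := by positivity
  have hj0 : (0:ℝ) ≤ (j:ℝ)/N := by positivity
  have hk1 : ((k:ℝ)+1)/N ≤ 1 := by
    rw [div_le_one hNpos]
    have : (k+1 : ℕ) ≤ N := hk
    exact_mod_cast this
  have hj1 : ((j:ℝ)+1)/N ≤ 1 := by
    rw [div_le_one hNpos]
    have : (j+1 : ℕ) ≤ N := hj
    exact_mod_cast this
  have hsubk : Set.uIoc ((k:ℝ)/N) (((k:ℝ)+1)/N) ⊆ Set.Icc (0:ℝ) 1 := by
    rw [Set.uIoc_of_le hkle]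
    intro x hx; exact ⟨le_trans hk0 hx.1.le, le_trans hx.2 hk1⟩
  have hsubj : Set.uIoc ((j:ℝ)/N) (((j:ℝ)+1)/N) ⊆ Set.Icc (0:ℝ) 1 := by
    rw [Set.uIoc_of_le hjle]
    intro x hx; exact ⟨le_trans hj0 hx.1.le, le_trans hx.2 hj1⟩
  have hlenk : |((k:ℝ)+1)/N - (k:ℝ)/N| = 1/N := by
    have h : ((k:ℝ)+1)/N - (k:ℝ)/N = 1/N := by
      rw [div_sub_div_same]; norm_num
    rw [h, abs_of_nonneg (by positivity)]
  have hlenj : |((j:ℝ)+1)/N - (j:ℝ)/N| = 1/N := by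
    have h : ((j:ℝ)+1)/N - (j:ℝ)/N = 1/N := by
      rw [div_sub_div_same]; norm_num
    rw [h, abs_of_nonneg (by positivity)]
  rw [abs_mul, abs_of_pos hH0]
  by_cases hdist : Nat.dist k j ≤ 1
  · -- near case
    have hkj : k ≤ j + 1 ∧ j ≤ k + 1 := by
      simp only [Nat.dist] at hdist; omega
    have hinner : ∀ s ∈ Set.uIoc ((k:ℝ)/N) (((k:ℝ)+1)/N),
        ‖∫ t in ((j:ℝ)/N)..(((j:ℝ)+1)/N), σ s * σ t * |s - t| ^ (2*H-2)‖ ≤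
          Λ^2 * (2 * (2/(N:ℝ)) ^ (2*H-2+1) / (2*H-2+1)) := by
      intro s hs
      have hs01 : s ∈ Set.Icc (0:ℝ) 1 := hsubk hs
      have hskN : (k:ℝ)/N ≤ s ∧ s ≤ ((k:ℝ)+1)/N := by
        rw [Set.uIoc_of_le hkle] at hs; exact ⟨hs.1.le, hs.2⟩
      have hcast1 : (k:ℝ) ≤ (j:ℝ) + 1 := by exact_mod_cast hkj.1
      have hcast2 : (j:ℝ) ≤ (k:ℝ) + 1 := by exact_mod_cast hkj.2
      have hsu : s - 2/N ≤ (j:ℝ)/N := by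
        have h1 : ((k:ℝ)+1)/N - 2/N ≤ (j:ℝ)/N := by
          rw [div_sub_div_same, div_le_div_iff₀ hNpos hNpos]
          exact mul_le_mul_of_nonneg_right (by linarith) hNpos.le
        linarith [hskN.2]
      have hvs : ((j:ℝ)+1)/N ≤ s + 2/N := by
        have h1 : ((j:ℝ)+1)/N ≤ (k:ℝ)/N + 2/N := by
          rw [← add_div, div_le_div_iff₀ hNpos hNpos]
          exact mul_le_mul_of_nonneg_right (by linarith) hNpos.le
        linarith [hskN.1]
      have hub := inner_near hr hr0 hΛ hσmeas hσbd hjle hj0 hj1 hs01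
        (by positivity : (0:ℝ) ≤ 2/(N:ℝ)) hsu hvs
      have hlb : 0 ≤ ∫ t in ((j:ℝ)/N)..(((j:ℝ)+1)/N), σ s * σ t * |s - t| ^ (2*H-2) := by
        apply intervalIntegral.integral_nonneg hjle
        intro t ht
        have ht01 : t ∈ Set.Icc (0:ℝ) 1 := ⟨le_trans hj0 ht.1, le_trans ht.2 hj1⟩
        exact mul_nonneg (mul_nonneg (hσbd s hs01).1 (hσbd t ht01).1)
          (Real.rpow_nonneg (abs_nonneg _) _)
      rw [Real.norm_eq_abs, abs_of_nonneg hlb]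
      exact hub
    have houter := intervalIntegral.norm_integral_le_of_norm_le_const hinner
    rw [Real.norm_eq_abs, hlenk] at houter
    have had : aFun H (Nat.dist k j) = 1 := by simp [aFun, hdist]
    rw [had, mul_one]
    have hexp : 2*H-2+1 = 2*H-1 := by ring
    rw [hexp] at houter
    rw [Real.div_rpow (by norm_num : (0:ℝ) ≤ 2) hNpos.le] at houter
    calc H*(2*H-1) * |∫ s in ((k:ℝ)/N)..(((k:ℝ)+1)/N),
          ∫ t in ((j:ℝ)/N)..(((j:ℝ)+1)/N), σ s * σ t * |s - t| ^ (2*H-2)|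
        ≤ H*(2*H-1) * (Λ^2 * (2 * ((2:ℝ)^(2*H-1)/(N:ℝ)^(2*H-1)) / (2*H-1)) * (1/N)) :=
          mul_le_mul_of_nonneg_left houter hH0.le
      _ ≤ H*(2*H-1)*Λ^2*(2*(2:ℝ)^(2*H-1)/(2*H-1)+1) * ((N:ℝ)^(2*H))⁻¹ := by
          have hNsplit : (N:ℝ)^(2*H) = (N:ℝ)^(2*H-1) * (N:ℝ) := by
            rw [← Real.rpow_add_one hNpos.ne' (2*H-1)]
            congr 1
            ring
          rw [hNsplit]
          exact near_alg hHpos h2H hΛ hQ (Real.rpow_pos_of_pos hNpos _) hNpos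
  · -- far case
    push_neg at hdist
    have hd2 : 2 ≤ Nat.dist k j := hdist
    set m : ℕ := Nat.dist k j - 1 with hmdef
    have hm1 : 1 ≤ m := by omega
    have hmpos : (0:ℝ) < (m:ℝ) := by exact_mod_cast hm1
    have hmN : (0:ℝ) < (m:ℝ)/N := by positivity
    have hfar : ∀ s ∈ Set.uIoc ((k:ℝ)/N) (((k:ℝ)+1)/N),
        ∀ t ∈ Set.uIoc ((j:ℝ)/N) (((j:ℝ)+1)/N), (m:ℝ)/N ≤ |s - t| := by
      intro s hs t ht
      rw [Set.uIoc_of_le hkle] at hs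
      rw [Set.uIoc_of_le hjle] at ht
      rcases le_total k j with hkj | hkj
      · have hdeq : Nat.dist k j = j - k := Nat.dist_eq_sub_of_le hkj
        have hjk2 : k + 2 ≤ j := by omega
        have hmeq : (m:ℝ) = (j:ℝ) - k - 1 := by
          have hm' : m = j - (k + 1) := by omega
          rw [hm', Nat.cast_sub (by omega : k + 1 ≤ j)]
          push_cast; ring
        have h1 : (m:ℝ)/N ≤ t - s := by
          have ht1 : (j:ℝ)/N ≤ t := ht.1.le
          have hs1 : s ≤ ((k:ℝ)+1)/N := hs.2
          have he : (j:ℝ)/N - ((k:ℝ)+1)/N = ((j:ℝ) - k - 1)/N := by ring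
          rw [hmeq, ← he]
          linarith
        calc (m:ℝ)/N ≤ t - s := h1
          _ ≤ |t - s| := le_abs_self _
          _ = |s - t| := abs_sub_comm _ _
      · have hdeq : Nat.dist k j = k - j := by
          rw [Nat.dist_comm]; exact Nat.dist_eq_sub_of_le hkj
        have hjk2 : j + 2 ≤ k := by omega
        have hmeq : (m:ℝ) = (k:ℝ) - j - 1 := by
          have hm' : m = k - (j + 1) := by omega
          rw [hm', Nat.cast_sub (by omega : j + 1 ≤ k)]
          push_cast; ring
        have h1 : (m:ℝ)/N ≤ s - t := by
          have ht1 : t ≤ ((j:ℝ)+1)/N := ht.2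
          have hs1 : (k:ℝ)/N ≤ s := hs.1.le
          have he : (k:ℝ)/N - ((j:ℝ)+1)/N = ((k:ℝ) - j - 1)/N := by ring
          rw [hmeq, ← he]
          linarith
        calc (m:ℝ)/N ≤ s - t := h1
          _ ≤ |s - t| := le_abs_self _
    have hinner : ∀ s ∈ Set.uIoc ((k:ℝ)/N) (((k:ℝ)+1)/N),
        ‖∫ t in ((j:ℝ)/N)..(((j:ℝ)+1)/N), σ s * σ t * |s - t| ^ (2*H-2)‖ ≤
          Λ^2 * ((m:ℝ)/N) ^ (2*H-2) * (1/N) := by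
      intro s hs
      have hs01 : s ∈ Set.Icc (0:ℝ) 1 := hsubk hs
      have hpt : ∀ t ∈ Set.uIoc ((j:ℝ)/N) (((j:ℝ)+1)/N),
          ‖σ s * σ t * |s - t| ^ (2*H-2)‖ ≤ Λ^2 * ((m:ℝ)/N) ^ (2*H-2) := by
        intro t ht
        have ht01 : t ∈ Set.Icc (0:ℝ) 1 := hsubj ht
        have h1 := hσbd s hs01
        have h2 := hσbd t ht01
        have h3 : |s - t| ^ (2*H-2) ≤ ((m:ℝ)/N) ^ (2*H-2) :=
          Real.rpow_le_rpow_of_nonpos hmN (hfar s hs t ht) hr0.le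
        have h4 : (0:ℝ) ≤ |s - t| ^ (2*H-2) := Real.rpow_nonneg (abs_nonneg _) _
        rw [Real.norm_eq_abs, abs_of_nonneg (mul_nonneg (mul_nonneg h1.1 h2.1) h4)]
        have hA : σ s * σ t ≤ Λ^2 := by nlinarith [mul_le_mul h1.2 h2.2 h2.1 hΛ.le]
        have hy : (0:ℝ) ≤ ((m:ℝ)/N)^(2*H-2) := le_trans h4 h3
        calc σ s * σ t * |s - t| ^ (2*H-2)
            ≤ σ s * σ t * (((m:ℝ)/N)^(2*H-2)) :=
              mul_le_mul_of_nonneg_left h3 (mul_nonneg h1.1 h2.1)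
          _ ≤ Λ^2 * ((m:ℝ)/N)^(2*H-2) := mul_le_mul_of_nonneg_right hA hy
      have h := intervalIntegral.norm_integral_le_of_norm_le_const hpt
      rw [hlenj] at h
      exact h
    have houter := intervalIntegral.norm_integral_le_of_norm_le_const hinner
    rw [Real.norm_eq_abs, hlenk] at houter
    have had : aFun H (Nat.dist k j) = ((m:ℕ):ℝ) ^ (2*H-2) := by
      simp only [aFun, if_neg (by omega : ¬ Nat.dist k j ≤ 1)]
      rfl
    rw [had]
    rw [Real.div_rpow hmpos.le hNpos.le] at houter
    calc H*(2*H-1) * |∫ s in ((k:ℝ)/N)..(((k:ℝ)+1)/N),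
          ∫ t in ((j:ℝ)/N)..(((j:ℝ)+1)/N), σ s * σ t * |s - t| ^ (2*H-2)|
        ≤ H*(2*H-1) * (Λ^2 * ((m:ℝ)^(2*H-2)/(N:ℝ)^(2*H-2)) * (1/N) * (1/N)) :=
          mul_le_mul_of_nonneg_left houter hH0.le
      _ ≤ H*(2*H-1)*Λ^2*(2*(2:ℝ)^(2*H-1)/(2*H-1)+1) * ((N:ℝ)^(2*H))⁻¹ * (m:ℝ)^(2*H-2) := by
          have hNsplit : (N:ℝ)^(2*H) = (N:ℝ)^(2*H-2) * (N:ℝ) * (N:ℝ) := by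
            rw [← Real.rpow_add_one hNpos.ne' (2*H-2),
              ← Real.rpow_add_one hNpos.ne' (2*H-2+1)]
            congr 1
            ring
          rw [hNsplit]
          exact far_alg hHpos h2H hΛ (Real.rpow_nonneg hmpos.le _)
            (Real.rpow_pos_of_pos hNpos _) hNpos (by positivity)

lemma aFun_nonneg (H : ℝ) (d : ℕ) : 0 ≤ aFun H d := by
  unfold aFun
  by_cases hd : d ≤ 1 <;> simp [hd]
  exact Real.rpow_nonneg (Nat.cast_nonneg _) _

lemma gFun_nonneg (H : ℝ) (d : ℕ) : 0 ≤ gFun H d := by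
  unfold gFun
  by_cases hd : d ≤ 1 <;> simp [hd]
  exact Real.rpow_nonneg (Nat.cast_nonneg _) _

lemma aFun_sq (H : ℝ) (d : ℕ) : (aFun H d)^2 = gFun H d := by
  unfold aFun gFun
  by_cases hd : d ≤ 1
  · simp [hd]
  · simp only [if_neg hd]
    have hx : (0:ℝ) < ((d - 1 : ℕ) : ℝ) := by
      have : 1 ≤ d - 1 := by omega
      exact_mod_cast Nat.lt_of_lt_of_le Nat.zero_lt_one (by exact_mod_cast this)
    rw [← Real.rpow_natCast (((d - 1 : ℕ) : ℝ) ^ (2*H-2)) 2, ← Real.rpow_mul hx.le]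
    congr 1
    push_cast
    ring

/-- Uniform boundedness of S_N = 2 N^{4H−1} Σ_{k,j} (c^N_{kj})²
for H ∈ (1/2, 3/4): sup_{N ≥ 1} S_N < ∞. -/
theorem variance_sequence_bounded
    (H : ℝ) (hH : H ∈ Set.Ioo (1/2 : ℝ) (3/4))
    (Λ : ℝ) (hΛ : 0 < Λ)
    (σ : ℝ → ℝ) (hσmeas : Measurable σ)
    (hσbd : ∀ t ∈ Set.Icc (0:ℝ) 1, 0 ≤ σ t ∧ σ t ≤ Λ)
    (c : ℕ → ℕ → ℕ → ℝ)
    (hc : ∀ N k j : ℕ, c N k j = H * (2*H - 1) *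
      ∫ s in ((k : ℝ)/N)..(((k : ℝ) + 1)/N),
        ∫ t in ((j : ℝ)/N)..(((j : ℝ) + 1)/N), σ s * σ t * |s - t| ^ (2*H - 2))
    (S : ℕ → ℝ)
    (hS : ∀ N : ℕ, S N = 2 * (N : ℝ) ^ (4*H - 1) *
      ∑ k ∈ Finset.range N, ∑ j ∈ Finset.range N, (c N k j)^2) :
    ∃ C : ℝ, ∀ N : ℕ, 1 ≤ N → S N ≤ C := by
  obtain ⟨hH1, hH2⟩ := hH
  have hgsum : Summable (gFun H) := summable_g (by linarith) 1
  set K : ℝ := H*(2*H-1)*Λ^2*(2*(2:ℝ)^(2*H-1)/(2*H-1)+1) with hKdef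
  set T : ℝ := ∑' d, gFun H d with hTdef
  refine ⟨4*K^2*T, ?_⟩
  intro N hN
  have hNpos : (0:ℝ) < N := by exact_mod_cast hN
  have hsum_bound : ∑ k ∈ Finset.range N, ∑ j ∈ Finset.range N, (c N k j)^2 ≤
      (N:ℝ) * (K^2 * (((N:ℝ)^(2*H))⁻¹)^2 * (2*T)) := by
    calc ∑ k ∈ Finset.range N, ∑ j ∈ Finset.range N, (c N k j)^2
        ≤ ∑ _k ∈ Finset.range N, (K^2 * (((N:ℝ)^(2*H))⁻¹)^2 * (2*T)) := by
          apply Finset.sum_le_sum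
          intro k hk
          rw [Finset.mem_range] at hk
          calc ∑ j ∈ Finset.range N, (c N k j)^2
              ≤ ∑ j ∈ Finset.range N,
                  K^2 * (((N:ℝ)^(2*H))⁻¹)^2 * gFun H (Nat.dist k j) := by
                apply Finset.sum_le_sum
                intro j hj
                rw [Finset.mem_range] at hj
                have hp : |c N k j| ≤ K * (((N:ℝ)^(2*H))⁻¹) * aFun H (Nat.dist k j) := by
                  rw [hc]
                  exact pair_bound hH1 hH2 hΛ hσmeas hσbd N k j (by omega) hk hj
                calc (c N k j)^2 = |c N k j|^2 := (sq_abs _).symm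
                  _ ≤ (K * (((N:ℝ)^(2*H))⁻¹) * aFun H (Nat.dist k j))^2 :=
                      pow_le_pow_left₀ (abs_nonneg _) hp 2
                  _ = K^2 * (((N:ℝ)^(2*H))⁻¹)^2 * (aFun H (Nat.dist k j))^2 := by ring
                  _ = K^2 * (((N:ℝ)^(2*H))⁻¹)^2 * gFun H (Nat.dist k j) := by
                      rw [aFun_sq]
            _ = K^2 * (((N:ℝ)^(2*H))⁻¹)^2 * ∑ j ∈ Finset.range N, gFun H (Nat.dist k j) := by
                rw [Finset.mul_sum]
            _ ≤ K^2 * (((N:ℝ)^(2*H))⁻¹)^2 * (2*T) := by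
                apply mul_le_mul_of_nonneg_left (sum_dist_le (gFun_nonneg H) hgsum N k)
                positivity
      _ = (N:ℝ) * (K^2 * (((N:ℝ)^(2*H))⁻¹)^2 * (2*T)) := by
          rw [Finset.sum_const, Finset.card_range, nsmul_eq_mul]
  have hone : (N:ℝ)^(4*H-1) * (((N:ℝ)^(2*H))⁻¹)^2 * (N:ℝ) = 1 := by
    have e1 : (((N:ℝ)^(2*H))⁻¹)^2 = ((N:ℝ)^(4*H))⁻¹ := by
      rw [sq, ← mul_inv, ← Real.rpow_add hNpos]
      congr 1
      congr 1
      ring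
    have e2 : (N:ℝ)^(4*H-1) * (N:ℝ) = (N:ℝ)^(4*H) := by
      rw [← Real.rpow_add_one hNpos.ne' (4*H-1)]
      congr 1
      ring
    calc (N:ℝ)^(4*H-1) * (((N:ℝ)^(2*H))⁻¹)^2 * (N:ℝ)
        = (N:ℝ)^(4*H-1) * (N:ℝ) * (((N:ℝ)^(2*H))⁻¹)^2 := by ring
      _ = (N:ℝ)^(4*H) * ((N:ℝ)^(4*H))⁻¹ := by rw [e1, e2]
      _ = 1 := mul_inv_cancel₀ (Real.rpow_pos_of_pos hNpos _).ne'
  have hrp : (0:ℝ) ≤ 2 * (N:ℝ)^(4*H-1) := by positivity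
  calc S N = 2 * (N:ℝ)^(4*H-1) * ∑ k ∈ Finset.range N, ∑ j ∈ Finset.range N, (c N k j)^2 :=
        hS N
    _ ≤ 2 * (N:ℝ)^(4*H-1) * ((N:ℝ) * (K^2 * (((N:ℝ)^(2*H))⁻¹)^2 * (2*T))) :=
        mul_le_mul_of_nonneg_left hsum_bound hrp
    _ = 4*K^2*T * ((N:ℝ)^(4*H-1) * (((N:ℝ)^(2*H))⁻¹)^2 * (N:ℝ)) := by ring
    _ = 4*K^2*T := by rw [hone, mul_one]
end
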